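/- arXiv:2210.11706 — 4 statements merged into one kernel-verified Lean document; each statement's English description precedes it below -/
import Mathlib

section
/- Let X be a smooth manifold around x̄, and let S : ℝⁿ ⇉ ℝᵐ be such that gph S|_X is locally closed at (x̄,ū). Then for all (x,u) ∈ gph S|_X close enough to (x̄,ū), proj_{T_X(x)×ℝᵐ} N̂_{gph S|_X}(x,u) = N̂_{gph S|_X}(x,u) ∩ (T_X(x) × ℝᵐ). -/
open Filter Topology Set Metric
open scoped ENNReal NNReal

noncomputable section

/-- Euclidean space ℝⁿ. -/
abbrev Euc (n : ℕ) := EuclideanSpace ℝ (Fin n)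

variable {E F : Type*}

/-- Set-valued metric (nearest-point) projection onto `C`. -/
def projSet [NormedAddCommGroup E] (C : Set E) (v : E) : Set E :=
  {y | y ∈ C ∧ ‖v - y‖ = Metric.infDist v C}

/-- Bouligand (contingent) tangent cone to `C` at `x`. -/
def tanCone [NormedAddCommGroup E] [NormedSpace ℝ E] (C : Set E) (x : E) : Set E :=
  {w | ∃ t : ℕ → ℝ, ∃ w' : ℕ → E, (∀ k, 0 < t k) ∧ Tendsto t atTop (𝓝 0) ∧
      Tendsto w' atTop (𝓝 w) ∧ ∀ k, x + t k • w' k ∈ C}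

section Normals
variable [NormedAddCommGroup E] [InnerProductSpace ℝ E]
  [NormedAddCommGroup F] [InnerProductSpace ℝ F]

/-- Fréchet (regular) normal cone to `C` at `x`. -/
def fNormal (C : Set E) (x : E) : Set E :=
  {v | x ∈ C ∧ ∀ ε > 0, ∃ δ > 0, ∀ y ∈ C, ‖y - x‖ < δ → (inner ℝ v (y - x) : ℝ) ≤ ε * ‖y - x‖}

/-- Limiting (Mordukhovich) normal cone to `C` at `x`. -/
def lNormal (C : Set E) (x : E) : Set E :=
  {v | x ∈ C ∧ ∃ xk vk : ℕ → E, (∀ k, vk k ∈ fNormal C (xk k)) ∧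
      Tendsto xk atTop (𝓝 x) ∧ Tendsto vk atTop (𝓝 v)}

/-- Fréchet normal cone to a subset of a product space (componentwise inner ℝ product). -/
def fNormal2 (D : Set (E × F)) (z : E × F) : Set (E × F) :=
  {v | z ∈ D ∧ ∀ ε > 0, ∃ δ > 0, ∀ z' ∈ D, ‖z' - z‖ < δ →
      (inner ℝ v.1 (z'.1 - z.1) : ℝ) + (inner ℝ v.2 (z'.2 - z.2) : ℝ) ≤ ε * ‖z' - z‖}

/-- Limiting normal cone to a subset of a product space. -/
def lNormal2 (D : Set (E × F)) (z : E × F) : Set (E × F) :=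
  {v | z ∈ D ∧ ∃ zk vk : ℕ → E × F, (∀ k, vk k ∈ fNormal2 D (zk k)) ∧
      Tendsto zk atTop (𝓝 z) ∧ Tendsto vk atTop (𝓝 v)}

/-- Graph of a set-valued mapping. -/
def gph (S : E → Set F) : Set (E × F) := {z | z.2 ∈ S z.1}

/-- Restriction of a set-valued mapping to a set `X`. -/
def restr (S : E → Set F) (X : Set E) : E → Set F := fun x => {u | u ∈ S x ∧ x ∈ X}

/-- Fréchet coderivative of `S` at `x` for `u`. -/
def fCoderiv (S : E → Set F) (x : E) (u : F) (u' : F) : Set E :=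
  {x' | (x', -u') ∈ fNormal2 (gph S) (x, u)}

/-- Limiting coderivative of `S` at `x` for `u`. -/
def coderiv (S : E → Set F) (x : E) (u : F) (u' : F) : Set E :=
  {x' | (x', -u') ∈ lNormal2 (gph S) (x, u)}

/-- Projection of the limiting normal cone of `gph (restr S X)` at `z`
onto `T_X(z.1) × F` (projection acting on the first component only). -/
def projNormal (S : E → Set F) (X : Set E) (z : E × F) : Set (E × F) :=
  {q | ∃ v : E, (v, q.2) ∈ lNormal2 (gph (restr S X)) z ∧ q.1 ∈ projSet (tanCone X z.1) v}

/-- Projectional coderivative of `S` relative to `X` at `x` for `u`: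
the outer limit of the projected normal cones along `gph (restr S X)`. -/
def projCoderiv (S : E → Set F) (X : Set E) (x : E) (u : F) (u' : F) : Set E :=
  {t | ∃ zk qk : ℕ → E × F,
      (∀ k, zk k ∈ gph (restr S X)) ∧ (∀ k, qk k ∈ projNormal S X (zk k)) ∧
      Tendsto zk atTop (𝓝 (x, u)) ∧ Tendsto qk atTop (𝓝 (t, -u'))}

/-- `C` is locally closed at `z`. -/
def LocallyClosedAt (C : Set E) (z : E) : Prop :=
  ∃ ε > 0, IsClosed (C ∩ Metric.closedBall z ε)

/-- `S` has the Lipschitz-like (Aubin) property relative to `X` at `xb` for `ub`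
with constant `κ`. -/
def LipschitzLikeRel (S : E → Set F) (X : Set E) (xb : E) (ub : F) (κ : ℝ) : Prop :=
  LocallyClosedAt (gph S) (xb, ub) ∧
  ∃ V ∈ 𝓝 xb, ∃ W ∈ 𝓝 ub, ∀ x ∈ X ∩ V, ∀ x' ∈ X ∩ V, ∀ u ∈ S x' ∩ W,
    ∃ u'' ∈ S x, ‖u - u''‖ ≤ κ * ‖x' - x‖

end Normals

/-- `X ⊆ ℝⁿ` is a smooth manifold around `x₀`, witnessed by the chart data
`(O, Φ, Φ')`: `O` open containing `x₀`, `X ∩ O = Φ⁻¹(0)`, `Φ` is `C¹` on `O`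
with derivative `Φ'`, and `Φ'(x₀)` is surjective (full rank). -/
def IsSmoothMfdChart {n c : ℕ} (X : Set (Euc n)) (x₀ : Euc n) (O : Set (Euc n))
    (Φ : Euc n → Euc c) (Φ' : Euc n → (Euc n →L[ℝ] Euc c)) : Prop :=
  IsOpen O ∧ x₀ ∈ O ∧ X ∩ O = {x | x ∈ O ∧ Φ x = 0} ∧
  (∀ x ∈ O, HasFDerivAt Φ (Φ' x) x) ∧ ContinuousOn Φ' O ∧
  Function.Surjective (Φ' x₀)

/-- `X ⊆ ℝⁿ` is a smooth manifold around `x₀`. -/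
def SmoothManifoldAround {n : ℕ} (X : Set (Euc n)) (x₀ : Euc n) : Prop :=
  ∃ (c : ℕ) (O : Set (Euc n)) (Φ : Euc n → Euc c) (Φ' : Euc n → (Euc n →L[ℝ] Euc c)),
    IsSmoothMfdChart X x₀ O Φ Φ'

/-- Projection of the Fréchet normal cone of `gph (restr S X)` at `z`
onto `T_X(z.1) × F` (projection acting on the first component only). -/
def fProjNormal {E F : Type*} [NormedAddCommGroup E] [InnerProductSpace ℝ E]
    [NormedAddCommGroup F] [InnerProductSpace ℝ F]
    (S : E → Set F) (X : Set E) (z : E × F) : Set (E × F) :=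
  {q | ∃ v : E, (v, q.2) ∈ fNormal2 (gph (restr S X)) z ∧ q.1 ∈ projSet (tanCone X z.1) v}

/-- A surjective CLM between Euclidean spaces has `A ∘ A†` a unit. -/
lemma isUnit_comp_adjoint {n c : ℕ} (A : Euc n →L[ℝ] Euc c)
    (hs : Function.Surjective A) :
    IsUnit (A ∘L ContinuousLinearMap.adjoint A) := by
  set T := A ∘L ContinuousLinearMap.adjoint A with hT
  have hinj : Function.Injective T := by
    intro y₁ y₂ h
    have h0 : T (y₁ - y₂) = 0 := by rw [map_sub, h, sub_self]
    have hA : ContinuousLinearMap.adjoint A (y₁ - y₂) = 0 := by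
      have : (inner ℝ (ContinuousLinearMap.adjoint A (y₁ - y₂))
          (ContinuousLinearMap.adjoint A (y₁ - y₂)) : ℝ) = 0 := by
        rw [ContinuousLinearMap.adjoint_inner_left]
        simp only [hT, ContinuousLinearMap.comp_apply] at h0
        rw [h0, inner_zero_right]
      exact inner_self_eq_zero.mp this
    -- A surjective ⟹ adjoint A injective
    have hadj_inj : Function.Injective (ContinuousLinearMap.adjoint A) := by
      intro z₁ z₂ hz
      have : ∀ x, (inner ℝ (z₁ - z₂) (A x) : ℝ) = 0 := by
        intro x
        rw [← ContinuousLinearMap.adjoint_inner_left, map_sub, hz, sub_self, inner_zero_left]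
      have := this
      obtain ⟨x, hx⟩ := hs (z₁ - z₂)
      have h2 := this x
      rw [hx, inner_self_eq_zero] at h2
      exact sub_eq_zero.mp h2
    have := hadj_inj (show ContinuousLinearMap.adjoint A (y₁ - y₂)
      = ContinuousLinearMap.adjoint A 0 by rw [map_zero, hA])
    exact sub_eq_zero.mp this
  have hbij : Function.Bijective T :=
    ⟨hinj, (LinearMap.injective_iff_surjective (f := (T : Euc c →ₗ[ℝ] Euc c))).mp hinj⟩
  let e : Euc c ≃L[ℝ] Euc c :=
    (LinearEquiv.ofBijective (T : Euc c →ₗ[ℝ] Euc c) hbij).toContinuousLinearEquiv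
  refine ⟨⟨T, e.symm.toContinuousLinearMap, ?_, ?_⟩, rfl⟩
  · refine ContinuousLinearMap.ext fun y => ?_
    simp only [ContinuousLinearMap.mul_apply, ContinuousLinearMap.one_apply]
    exact e.apply_symm_apply y
  · refine ContinuousLinearMap.ext fun y => ?_
    simp only [ContinuousLinearMap.mul_apply, ContinuousLinearMap.one_apply]
    exact e.symm_apply_apply y

/-- Surjectivity of `A` follows from `A ∘ A†` being a unit. -/
lemma surj_of_isUnit {n c : ℕ} (A : Euc n →L[ℝ] Euc c)
    (h : IsUnit (A ∘L ContinuousLinearMap.adjoint A)) :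
    Function.Surjective A := by
  obtain ⟨u, hu⟩ := h
  intro y
  refine ⟨ContinuousLinearMap.adjoint A ((↑u⁻¹ : Euc c →L[ℝ] Euc c) y), ?_⟩
  have h1 : ((↑u * ↑u⁻¹ : Euc c →L[ℝ] Euc c)) y = y := by rw [u.mul_inv]; rfl
  calc A (ContinuousLinearMap.adjoint A ((↑u⁻¹ : Euc c →L[ℝ] Euc c) y))
      = (A ∘L ContinuousLinearMap.adjoint A) ((↑u⁻¹ : Euc c →L[ℝ] Euc c) y) := rfl
    _ = (↑u : Euc c →L[ℝ] Euc c) ((↑u⁻¹ : Euc c →L[ℝ] Euc c) y) := by rw [hu]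
    _ = y := h1

/-- Near a point where the derivative is surjective and continuous, it stays surjective. -/
lemma surj_nhds {n c : ℕ} (O : Set (Euc n)) (Φ' : Euc n → (Euc n →L[ℝ] Euc c))
    (hO : IsOpen O) (hc : ContinuousOn Φ' O) (x₀ : Euc n) (hx₀ : x₀ ∈ O)
    (hs : Function.Surjective (Φ' x₀)) :
    ∃ r > 0, ball x₀ r ⊆ O ∧ ∀ x ∈ ball x₀ r, Function.Surjective (Φ' x) := by
  have hcont : ContinuousAt (fun x => (Φ' x) ∘L ContinuousLinearMap.adjoint (Φ' x)) x₀ := by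
    have h1 : ContinuousAt Φ' x₀ := hc.continuousAt (hO.mem_nhds hx₀)
    have h2 : ContinuousAt (fun x => ContinuousLinearMap.adjoint (Φ' x)) x₀ :=
      (ContinuousLinearMap.adjoint.toContinuousLinearEquiv.continuous.continuousAt).comp h1
    have h3 : ContinuousAt (fun x => (ContinuousLinearMap.compL ℝ (Euc c) (Euc n) (Euc c))
        (Φ' x) (ContinuousLinearMap.adjoint (Φ' x))) x₀ :=
      ContinuousAt.comp (f := fun x => (Φ' x, ContinuousLinearMap.adjoint (Φ' x)))
        ((ContinuousLinearMap.compL ℝ (Euc c) (Euc n) (Euc c)).continuous₂.continuousAt)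
        (h1.prodMk h2)
    exact h3
  have hunit : IsUnit ((Φ' x₀) ∘L ContinuousLinearMap.adjoint (Φ' x₀)) :=
    isUnit_comp_adjoint _ hs
  have hopen : IsOpen {T : Euc c →L[ℝ] Euc c | IsUnit T} := Units.isOpen
  have hnhds : {x | IsUnit ((Φ' x) ∘L ContinuousLinearMap.adjoint (Φ' x))} ∈ 𝓝 x₀ :=
    hcont (hopen.mem_nhds hunit)
  obtain ⟨r₁, hr₁, hball₁⟩ := Metric.mem_nhds_iff.mp hnhds
  obtain ⟨r₂, hr₂, hball₂⟩ := Metric.mem_nhds_iff.mp (hO.mem_nhds hx₀)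
  refine ⟨min r₁ r₂, lt_min hr₁ hr₂, ?_, ?_⟩
  · exact fun x hx => hball₂ (ball_subset_ball (min_le_right _ _) hx)
  · intro x hx
    exact surj_of_isUnit _ (hball₁ (ball_subset_ball (min_le_left _ _) hx))

/-- In finite dimensions, `(ker A)ᗮ ⊆ range A†`. -/
lemma mem_range_adjoint {n c : ℕ} (A : Euc n →L[ℝ] Euc c) {v : Euc n}
    (hv : v ∈ (LinearMap.ker (A : Euc n →ₗ[ℝ] Euc c))ᗮ) : ∃ y, ContinuousLinearMap.adjoint A y = v := by
  set R : Submodule ℝ (Euc n) := LinearMap.range (ContinuousLinearMap.adjoint A : Euc c →ₗ[ℝ] Euc n) with hR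
  have hRk : Rᗮ ≤ LinearMap.ker (A : Euc n →ₗ[ℝ] Euc c) := by
    intro w hw
    have h : ∀ y : Euc c, (inner ℝ (ContinuousLinearMap.adjoint A y) w : ℝ) = 0 := fun y =>
      hw _ ⟨y, rfl⟩
    have : (inner ℝ (A w) (A w) : ℝ) = 0 := by
      have := h (A w)
      rwa [ContinuousLinearMap.adjoint_inner_left] at this
    simpa [LinearMap.mem_ker] using inner_self_eq_zero.mp this
  have h2 : (LinearMap.ker (A : Euc n →ₗ[ℝ] Euc c))ᗮ ≤ Rᗮᗮ := Submodule.orthogonal_le hRk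
  rw [Submodule.orthogonal_orthogonal] at h2
  obtain ⟨y, hy⟩ := h2 hv
  exact ⟨y, hy⟩

/-- Tangent vectors to `X` at `x` lie in the kernel of the derivative of the defining map. -/
lemma tanCone_subset_ker {n c : ℕ} {X O : Set (Euc n)} {Φ : Euc n → Euc c}
    {A : Euc n →L[ℝ] Euc c} (hO : IsOpen O)
    (hXO : X ∩ O = {x | x ∈ O ∧ Φ x = 0}) {x : Euc n} (hxO : x ∈ O) (hxX : x ∈ X)
    (hd : HasFDerivAt Φ A x) :
    ∀ w ∈ tanCone X x, A w = 0 := by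
  intro w hw
  obtain ⟨t, w', ht, ht0, hw', hmem⟩ := hw
  have hΦx : Φ x = 0 := (hXO ▸ Set.mem_sep hxX hxO : x ∈ {x | x ∈ O ∧ Φ x = 0}).2
  -- h k := t k • w' k → 0
  have hh : Tendsto (fun k => t k • w' k) atTop (𝓝 0) := by
    have := ht0.smul hw'
    simpa using this
  -- eventually x + h k ∈ O
  have hO' : ∀ᶠ k in atTop, x + t k • w' k ∈ O := by
    have : Tendsto (fun k => x + t k • w' k) atTop (𝓝 (x + 0)) := tendsto_const_nhds.add hh
    rw [add_zero] at this
    exact this (hO.mem_nhds hxO)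
  -- littleO
  have hlo := hd.isLittleO
  rw [Asymptotics.isLittleO_iff] at hlo
  -- conclude ‖A w‖ ≤ ε ‖w‖ for all ε > 0
  have key : ∀ ε > (0:ℝ), ‖A w‖ ≤ ε * ‖w‖ := by
    intro ε hε
    have hev : ∀ᶠ k in atTop, ‖A (w' k)‖ ≤ ε * ‖w' k‖ := by
      have hx' : Tendsto (fun k => x + t k • w' k) atTop (𝓝 x) := by
        have : Tendsto (fun k => x + t k • w' k) atTop (𝓝 (x + 0)) := tendsto_const_nhds.add hh
        rwa [add_zero] at this
      have hball := hx' (hlo hε)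
      filter_upwards [hball, hO'] with k hk hkO
      -- Φ (x + t k • w' k) = 0
      have hXk : x + t k • w' k ∈ X ∩ O := ⟨hmem k, hkO⟩
      have hΦk : Φ (x + t k • w' k) = 0 := (hXO ▸ hXk : _ ∈ {x | x ∈ O ∧ Φ x = 0}).2
      have hk' : ‖A (t k • w' k)‖ ≤ ε * ‖t k • w' k‖ := by
        have hk0 : ‖Φ (x + t k • w' k) - Φ x - A (x + t k • w' k - x)‖
            ≤ ε * ‖x + t k • w' k - x‖ := hk
        rw [hΦk, hΦx, add_sub_cancel_left, sub_zero, zero_sub, norm_neg] at hk0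
        exact hk0
      rw [map_smul, norm_smul, norm_smul] at hk'
      have htk : ‖t k‖ = t k := Real.norm_of_nonneg (ht k).le
      rw [htk] at hk'
      have := (mul_le_mul_iff_right₀ (ht k)).mp
        (by linarith [hk'] : t k * ‖A (w' k)‖ ≤ t k * (ε * ‖w' k‖))
      linarith
    have h1 : Tendsto (fun k => ‖A (w' k)‖) atTop (𝓝 ‖A w‖) :=
      ((A.continuous.tendsto w).comp hw').norm
    have h2 : Tendsto (fun k => ε * ‖w' k‖) atTop (𝓝 (ε * ‖w‖)) :=
      (hw'.norm).const_mul ε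
    exact le_of_tendsto_of_tendsto h1 h2 hev
  by_contra hne
  have hpos : 0 < ‖A w‖ := norm_pos_iff.mpr hne
  have := key (‖A w‖ / (2 * (‖w‖ + 1))) (by positivity)
  have hle : ‖A w‖ ≤ ‖A w‖ / (2 * (‖w‖ + 1)) * ‖w‖ := this
  have hlt : ‖A w‖ / (2 * (‖w‖ + 1)) * ‖w‖ < ‖A w‖ := by
    rw [div_mul_eq_mul_div, div_lt_iff₀ (by positivity)]
    have h0 : (0:ℝ) ≤ ‖w‖ := norm_nonneg w
    nlinarith [hpos]
  linarith

set_option maxHeartbeats 1000000 in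
/-- Kernel vectors of the derivative are tangent to the level set (implicit function theorem). -/
lemma ker_subset_tanCone {n c : ℕ} {X O : Set (Euc n)} {Φ : Euc n → Euc c}
    {Φ' : Euc n → (Euc n →L[ℝ] Euc c)} (hO : IsOpen O)
    (hXO : X ∩ O = {x | x ∈ O ∧ Φ x = 0})
    (hd : ∀ y ∈ O, HasFDerivAt Φ (Φ' y) y) (hc : ContinuousOn Φ' O)
    {x : Euc n} (hxO : x ∈ O) (hxX : x ∈ X)
    (hsurj : Function.Surjective (Φ' x)) :
    ∀ w, Φ' x w = 0 → w ∈ tanCone X x := by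
  intro w hw
  have hΦx : Φ x = 0 := (hXO ▸ Set.mem_sep hxX hxO : x ∈ {x | x ∈ O ∧ Φ x = 0}).2
  -- strict differentiability at x
  have hstrict : HasStrictFDerivAt Φ (Φ' x) x :=
    hasStrictFDerivAt_of_hasFDerivAt_of_continuousAt
      ((hO.eventually_mem hxO).mono (fun y hy => hd y hy))
      (hc.continuousAt (hO.mem_nhds hxO))
  have hf' : LinearMap.range (Φ' x : Euc n →ₗ[ℝ] Euc c) = ⊤ :=
    LinearMap.range_eq_top (f := (Φ' x : Euc n →ₗ[ℝ] Euc c)).mpr hsurj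
  set K := LinearMap.ker (Φ' x : Euc n →ₗ[ℝ] Euc c)
  set g : K → Euc n := hstrict.implicitFunction Φ (Φ' x) hf' (Φ x) with hg
  have hg0 : g 0 = x := hstrict.implicitFunction_apply_image hf'
  have hgd : HasStrictFDerivAt g K.subtypeL 0 := hstrict.to_implicitFunction hf'
  -- eventually Φ (g y) = Φ x
  have hmap := hstrict.map_implicitFunction_eq hf'
  have hpair : Tendsto (fun y : K => ((Φ x : Euc c), y)) (𝓝 0) (𝓝 (Φ x, 0)) :=
    (continuous_const.prodMk continuous_id).tendsto 0
  have hΦg : ∀ᶠ y : K in 𝓝 0, Φ (g y) = Φ x := hpair.eventually hmap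
  -- eventually g y ∈ O
  have hgO : ∀ᶠ y : K in 𝓝 0, g y ∈ O := by
    have hcont : ContinuousAt g 0 := hgd.continuousAt
    have : Tendsto g (𝓝 0) (𝓝 x) := by rw [← hg0]; exact hcont
    exact this (hO.mem_nhds hxO)
  obtain ⟨ε, hε, hball⟩ := Metric.eventually_nhds_iff_ball.mp (hΦg.and hgO)
  -- the element of K
  set wK : K := ⟨w, hw⟩ with hwK
  -- time steps
  set t : ℕ → ℝ := fun k => ε / ((‖w‖ + 1) * (k + 2)) with htdef
  have htpos : ∀ k, 0 < t k := by
    intro k; apply div_pos hε; positivity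
  have ht0 : Tendsto t atTop (𝓝 0) := by
    rw [htdef]
    apply Tendsto.div_atTop (tendsto_const_nhds (x := ε))
    apply Tendsto.const_mul_atTop (by positivity : (0:ℝ) < ‖w‖ + 1)
    exact tendsto_atTop_add_const_right _ 2 (tendsto_natCast_atTop_atTop)
  have hmemball : ∀ k, t k • wK ∈ ball (0 : K) ε := by
    intro k
    rw [mem_ball_zero_iff]
    have : ‖t k • wK‖ = t k * ‖w‖ := by
      rw [norm_smul, Real.norm_of_nonneg (htpos k).le]; rfl
    rw [this, htdef]
    have hk0 : (0:ℝ) ≤ (k:ℝ) := Nat.cast_nonneg k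
    have hk2 : (1:ℝ) < (k:ℝ)+2 := by linarith
    calc ε / ((‖w‖ + 1) * (k + 2)) * ‖w‖ ≤ ε / ((‖w‖ + 1) * 1) * ‖w‖ := by
          apply mul_le_mul_of_nonneg_right _ (norm_nonneg w)
          apply div_le_div_of_nonneg_left hε.le (by positivity)
          apply mul_le_mul_of_nonneg_left (by linarith) (by positivity)

      _ = ε * (‖w‖ / (‖w‖ + 1)) := by ring
      _ < ε * 1 := by
          apply mul_lt_mul_of_pos_left _ hε
          rw [div_lt_one (by positivity)]; linarith
      _ = ε := mul_one ε
  -- sequence points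
  set w' : ℕ → Euc n := fun k => (t k)⁻¹ • (g (t k • wK) - x) with hw'def
  refine ⟨t, w', htpos, ht0, ?_, ?_⟩
  · -- w' → w
    have hlo := hgd.hasFDerivAt.isLittleO
    rw [Asymptotics.isLittleO_iff] at hlo
    rw [NormedAddCommGroup.tendsto_atTop]
    intro εb hεb
    set cδ : ℝ := εb / (2 * (‖w‖ + 1)) with hcδdef
    have hcδ : 0 < cδ := by positivity
    obtain ⟨δ, hδ, hδball⟩ := Metric.eventually_nhds_iff_ball.mp (hlo hcδ)
    have htw : Tendsto (fun k => t k • wK) atTop (𝓝 0) := by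
      have := ht0.smul (tendsto_const_nhds (x := wK))
      simpa using this
    obtain ⟨N, hN⟩ := (Metric.tendsto_atTop.mp htw) δ hδ
    refine ⟨N, fun k hk => ?_⟩
    have hmem : t k • wK ∈ ball (0 : K) δ := by
      rw [mem_ball_zero_iff]
      have := hN k hk
      rwa [dist_zero_right] at this
    have hest := hδball _ hmem
    have hsub : (K.subtypeL) (t k • wK - 0) = t k • w := by
      simp [wK]
    rw [hg0] at hest  -- replace g 0 by x? hest mentions g (t k • wK) - g 0
    have hest' : ‖g (t k • wK) - x - t k • w‖ ≤ cδ * (t k * ‖w‖) := by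
      have h1 : ‖t k • wK - 0‖ = t k * ‖w‖ := by
        rw [sub_zero, norm_smul, Real.norm_of_nonneg (htpos k).le]
        rfl
      calc ‖g (t k • wK) - x - t k • w‖
          = ‖g (t k • wK) - x - (K.subtypeL) (t k • wK - 0)‖ := by rw [hsub]
        _ ≤ cδ * ‖t k • wK - 0‖ := hest
        _ = cδ * (t k * ‖w‖) := by rw [h1]
    have hwk : w' k - w = (t k)⁻¹ • (g (t k • wK) - x - t k • w) := by
      rw [hw'def]
      simp only [smul_sub]
      rw [smul_smul, inv_mul_cancel₀ (htpos k).ne', one_smul]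
    rw [hwk, norm_smul, Real.norm_of_nonneg (inv_nonneg.mpr (htpos k).le)]
    calc (t k)⁻¹ * ‖g (t k • wK) - x - t k • w‖ ≤ (t k)⁻¹ * (cδ * (t k * ‖w‖)) := by
          apply mul_le_mul_of_nonneg_left hest' (inv_nonneg.mpr (htpos k).le)
      _ = cδ * ‖w‖ * ((t k)⁻¹ * t k) := by ring
      _ = cδ * ‖w‖ := by rw [inv_mul_cancel₀ (htpos k).ne', mul_one]
      _ ≤ εb / 2 := by
          rw [hcδdef, div_mul_eq_mul_div, div_le_div_iff₀ (by positivity) (by norm_num)]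
          nlinarith [norm_nonneg w, hεb]
      _ < εb := by linarith
  · intro k
    have hb := hball _ (hmemball k)
    have hxk : x + t k • w' k = g (t k • wK) := by
      rw [hw'def]
      simp only [smul_smul, mul_inv_cancel₀ (htpos k).ne', one_smul]
      abel
    rw [hxk]
    have hmem : g (t k • wK) ∈ X ∩ O := by
      rw [hXO]
      exact ⟨hb.2, by rw [hb.1, hΦx]⟩
    exact hmem.1

/-- Vectors orthogonal to the kernel of the derivative are Fréchet normals to the level set. -/
lemma orth_ker_fnormal {n c : ℕ} {X O : Set (Euc n)} {Φ : Euc n → Euc c}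
    {A : Euc n →L[ℝ] Euc c} (hO : IsOpen O)
    (hXO : X ∩ O = {x | x ∈ O ∧ Φ x = 0}) {x : Euc n} (hxO : x ∈ O) (hxX : x ∈ X)
    (hd : HasFDerivAt Φ A x) {v : Euc n} (hv : v ∈ (LinearMap.ker (A : Euc n →ₗ[ℝ] Euc c))ᗮ) :
    ∀ ε > 0, ∃ δ > 0, ∀ x' ∈ X, ‖x' - x‖ < δ → (inner ℝ v (x' - x) : ℝ) ≤ ε * ‖x' - x‖ := by
  obtain ⟨y, hy⟩ := mem_range_adjoint A hv
  intro ε hε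
  have hΦx : Φ x = 0 := (hXO ▸ Set.mem_sep hxX hxO : x ∈ {x | x ∈ O ∧ Φ x = 0}).2
  set cc : ℝ := ε / (‖y‖ + 1) with hccdef
  have hcc : 0 < cc := by positivity
  have hlo := hd.isLittleO
  rw [Asymptotics.isLittleO_iff] at hlo
  obtain ⟨δ₁, hδ₁, hb₁⟩ := Metric.eventually_nhds_iff_ball.mp (hlo hcc)
  obtain ⟨δ₂, hδ₂, hb₂⟩ := Metric.mem_nhds_iff.mp (hO.mem_nhds hxO)
  refine ⟨min δ₁ δ₂, lt_min hδ₁ hδ₂, fun x' hx'X hx'n => ?_⟩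
  have hx'b : x' ∈ ball x δ₁ := by
    rw [mem_ball, dist_eq_norm]
    exact lt_of_lt_of_le hx'n (min_le_left _ _)
  have hx'O : x' ∈ O := hb₂ (by
    rw [mem_ball, dist_eq_norm]
    exact lt_of_lt_of_le hx'n (min_le_right _ _))
  have hΦx' : Φ x' = 0 := (hXO ▸ Set.mem_sep hx'X hx'O : x' ∈ {x | x ∈ O ∧ Φ x = 0}).2
  have hest := hb₁ _ hx'b
  have hA : ‖A (x' - x)‖ ≤ cc * ‖x' - x‖ := by
    have : ‖Φ x' - Φ x - A (x' - x)‖ ≤ cc * ‖x' - x‖ := hest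
    rwa [hΦx', hΦx, sub_zero, zero_sub, norm_neg] at this
  calc (inner ℝ v (x' - x) : ℝ) = inner ℝ (ContinuousLinearMap.adjoint A y) (x' - x) := by rw [hy]
    _ = inner ℝ y (A (x' - x)) := ContinuousLinearMap.adjoint_inner_left A (x' - x) y
    _ ≤ ‖y‖ * ‖A (x' - x)‖ := real_inner_le_norm _ _
    _ ≤ ‖y‖ * (cc * ‖x' - x‖) := by
        apply mul_le_mul_of_nonneg_left hA (norm_nonneg y)
    _ ≤ ε * ‖x' - x‖ := by
        rw [hccdef]
        rw [← mul_assoc]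
        apply mul_le_mul_of_nonneg_right _ (norm_nonneg _)
        rw [mul_div_assoc']
        rw [div_le_iff₀ (by positivity)]
        nlinarith [norm_nonneg y, hε]


set_option maxHeartbeats 1000000 in
/-- For a smooth manifold `X`, near the reference point the
projected Fréchet normal cone of `gph S|_X` equals its intersection with
`T_X(x) × ℝᵐ`. -/
theorem stmt5 {n m : ℕ} (S : Euc n → Set (Euc m)) (X : Set (Euc n))
    (xb : Euc n) (ub : Euc m) (hX : SmoothManifoldAround X xb)
    (hmem : (xb, ub) ∈ gph (restr S X))
    (hcl : LocallyClosedAt (gph (restr S X)) (xb, ub)) :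
    ∃ δ > 0, ∀ z ∈ gph (restr S X), dist z (xb, ub) < δ →
      fProjNormal S X z =
        fNormal2 (gph (restr S X)) z ∩ (tanCone X z.1 ×ˢ (univ : Set (Euc m))) := by
  obtain ⟨c, O, Φ, Φ', hOopen, hxbO, hXO, hd, hc, hsurj⟩ := hX
  obtain ⟨r, hr, hrO, hrs⟩ := surj_nhds O Φ' hOopen hc xb hxbO hsurj
  refine ⟨r, hr, fun z hz hzd => ?_⟩
  have hx1X : z.1 ∈ X := hz.2
  have hx1b : z.1 ∈ ball xb r := by
    rw [mem_ball]
    have h1 : dist z.1 xb ≤ dist z (xb, ub) := by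
      rw [Prod.dist_eq]; exact le_max_left _ _
    exact lt_of_le_of_lt h1 hzd
  have hx1O : z.1 ∈ O := hrO hx1b
  have hsurj1 : Function.Surjective (Φ' z.1) := hrs _ hx1b
  set A := Φ' z.1 with hAdef
  set K := LinearMap.ker (A : Euc n →ₗ[ℝ] Euc c) with hKdef
  have hdz : HasFDerivAt Φ A z.1 := hd _ hx1O
  have hK : tanCone X z.1 = (K : Set (Euc n)) := by
    apply Set.Subset.antisymm
    · intro w hw
      exact LinearMap.mem_ker.mpr (tanCone_subset_ker hOopen hXO hx1O hx1X hdz w hw)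
    · intro w hw
      exact ker_subset_tanCone hOopen hXO hd hc hx1O hx1X hsurj1 w (LinearMap.mem_ker.mp hw)
  ext q
  constructor
  · rintro ⟨v, hvN, hq1T, hqdist⟩
    have hq1K : q.1 ∈ K := by rw [hK] at hq1T; exact hq1T
    have hinf : ‖v - q.1‖ = ⨅ w : (K : Set (Euc n)), ‖v - ↑w‖ := by
      rw [hqdist, hK, Metric.infDist_eq_iInf]
      exact iInf_congr fun w => dist_eq_norm _ _
    have horth := (Submodule.norm_eq_iInf_iff_real_inner_eq_zero K hq1K).mp hinf
    have hvq : q.1 - v ∈ Kᗮ := by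
      have h1 : v - q.1 ∈ Kᗮ := (Submodule.mem_orthogonal' K _).mpr horth
      have h2 := Submodule.neg_mem _ h1
      rwa [neg_sub] at h2
    have hP := orth_ker_fnormal hOopen hXO hx1O hx1X hdz hvq
    refine ⟨⟨hvN.1, ?_⟩, ?_, trivial⟩
    · intro ε hε
      obtain ⟨δ₁, hδ₁, h₁⟩ := hvN.2 (ε/2) (by linarith)
      obtain ⟨δ₂, hδ₂, h₂⟩ := hP (ε/2) (by linarith)
      refine ⟨min δ₁ δ₂, lt_min hδ₁ hδ₂, fun z' hz' hzn => ?_⟩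
      have hz'X : z'.1 ∈ X := hz'.2
      have hfst : ‖z'.1 - z.1‖ ≤ ‖z' - z‖ := by
        calc ‖z'.1 - z.1‖ = ‖(z' - z).1‖ := by rw [Prod.fst_sub]
          _ ≤ ‖z' - z‖ := norm_fst_le _
      have e1 := h₁ z' hz' (lt_of_lt_of_le hzn (min_le_left _ _))
      have e2 := h₂ z'.1 hz'X (lt_of_le_of_lt hfst (lt_of_lt_of_le hzn (min_le_right _ _)))
      have hsplit : (inner ℝ q.1 (z'.1 - z.1) : ℝ)
          = inner ℝ v (z'.1 - z.1) + inner ℝ (q.1 - v) (z'.1 - z.1) := by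
        rw [← inner_add_left, add_sub_cancel]
      have hmul : ε/2 * ‖z'.1 - z.1‖ ≤ ε/2 * ‖z' - z‖ :=
        mul_le_mul_of_nonneg_left hfst (by linarith)
      rw [hsplit]
      linarith [e1, e2, hmul]
    · rw [hK]; exact hq1K
  · rintro ⟨hN, hT, -⟩
    refine ⟨q.1, hN, hT, ?_⟩
    rw [sub_self, norm_zero, Metric.infDist_zero_of_mem hT]
end
end

section
/- Let X be a smooth manifold around x̄ ∈ X, S : ℝⁿ ⇉ ℝᵐ with gph S locally closed at (x̄,ū), ū ∈ S(x̄). Then for all (x,u) near (x̄,ū) in gph S|_X and all u* ∈ ℝᵐ: D*_X S(x|u)(u*) = proj_{T_X(x)} D*S|_X(x|u)(u*) = D*S|_X(x|u)(u*) ∩ T_X(x). -/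
open Filter Topology Set Metric
open scoped ENNReal NNReal

noncomputable section

variable {E F : Type*}

/-!
Near `xb` the derivative of the chart stays surjective, so `T_X(x) = ker Φ'(x)` and projecting
onto `T_X(x)` changes the first component of a normal vector by some `Φ'(x)† y`. Since `Φ`
vanishes on `X`, every `(Φ'(x)† y, 0)` is a Fréchet normal to `gph S|_X` at `(x, u)`, and it
depends continuously on `x`; hence adding it preserves limiting normals, and every projected
normal is a limiting normal with tangent first component. The limiting normal cone is closed
under limits and `Φ'` is continuous, so the same holds for the outer limit:
`D*_X S ⊆ D*S|_X ∩ T_X`. Constant sequences give `proj_{T_X} D*S|_X ⊆ D*_X S`, and a tangent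
vector is its own projection.
-/

theorem mem_projSet_self [NormedAddCommGroup E] {C : Set E} {t : E} (ht : t ∈ C) :
    t ∈ projSet C t :=
  ⟨ht, by simp [Metric.infDist_zero_of_mem ht]⟩

section Projection

variable [NormedAddCommGroup E] [InnerProductSpace ℝ E]

theorem sub_mem_orthogonal_of_mem_projSet {K : Submodule ℝ E} {v t : E}
    (ht : t ∈ projSet K v) : v - t ∈ Kᗮ := by
  obtain ⟨htK, hdist⟩ := ht
  rw [Metric.infDist_eq_iInf] at hdist
  simp_rw [dist_eq_norm] at hdist
  exact (Submodule.mem_orthogonal' K _).2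
    ((Submodule.norm_eq_iInf_iff_real_inner_eq_zero K htK).1 hdist)

theorem exists_eq_add_adjoint_of_mem_projSet_ker [NormedAddCommGroup F] [InnerProductSpace ℝ F]
    [FiniteDimensional ℝ E] [CompleteSpace F] {A : E →L[ℝ] F} {v t : E}
    (ht : t ∈ projSet ((A : E →ₗ[ℝ] F).ker : Set E) v) :
    ∃ y, t = v + ContinuousLinearMap.adjoint A y := by
  have horth := sub_mem_orthogonal_of_mem_projSet ht
  rw [ContinuousLinearMap.orthogonal_ker,
    IsClosed.submodule_topologicalClosure_eq (Submodule.closed_of_finiteDimensional _)] at horth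
  obtain ⟨y, hy⟩ := horth
  refine ⟨-y, ?_⟩
  have hy' : ContinuousLinearMap.adjoint A y = v - t := hy
  rw [map_neg, hy']
  abel

end Projection

section TangentCone

variable [NormedAddCommGroup E] [NormedSpace ℝ E] {C : Set E} {x : E}

theorem tanCone_subset_tangentConeAt : tanCone C x ⊆ tangentConeAt ℝ C x := by
  rintro w ⟨t, w', ht₀, ht, hw', hC⟩
  refine mem_tangentConeAt_of_seq atTop (fun k => (t k)⁻¹) (fun k => t k • w' k) ?_
    (Eventually.of_forall hC) ?_
  · simpa using ht.smul hw'
  · simpa [inv_smul_smul₀ (ht₀ _).ne'] using hw'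

theorem tanCone_subset_ker_s7 [NormedAddCommGroup F] [NormedSpace ℝ F] {Φ : E → F}
    {A : E →L[ℝ] F} (hΦ : HasFDerivAt Φ A x) (hC : ∀ᶠ y in 𝓝 x, y ∈ C → Φ y = Φ x) :
    tanCone C x ⊆ ((A : E →ₗ[ℝ] F).ker : Set E) := by
  obtain ⟨U, hU, hCU⟩ := hC.exists_mem
  intro w hw
  have hmaps := (hΦ.hasFDerivWithinAt (s := C ∩ U)).mapsTo_tangent_cone
    (by rw [tangentConeAt_inter_nhds hU]; exact tanCone_subset_tangentConeAt hw)
  have himage : Φ '' (C ∩ U) ⊆ {Φ x} := by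
    rintro _ ⟨y, ⟨hyC, hyU⟩, rfl⟩
    exact hCU y hyU hyC
  have hnacc : ¬AccPt (Φ x) (𝓟 {Φ x}) := by
    rw [accPt_iff_nhds]
    push Not
    exact ⟨univ, univ_mem, by simp⟩
  exact tangentConeAt_subset_zero hnacc (tangentConeAt_mono himage hmaps)

theorem mem_tanCone_of_hasDerivAt {f : ℝ → E} {w : E} (hf : HasDerivAt f w 0)
    (hC : ∀ᶠ τ in 𝓝[>] 0, f τ ∈ C) : w ∈ tanCone C (f 0) := by
  obtain ⟨s, hs⟩ := (𝓝[>] (0 : ℝ)).exists_seq_tendsto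
  obtain ⟨N, hN⟩ := eventually_atTop.1 (hs.eventually (hC.and self_mem_nhdsWithin))
  have hsN : ∀ k, f (s (k + N)) ∈ C ∧ 0 < s (k + N) := fun k => hN _ (Nat.le_add_left N k)
  have ht : Tendsto (fun k => s (k + N)) atTop (𝓝[>] 0) := hs.comp (tendsto_add_atTop_nat N)
  refine ⟨fun k => s (k + N), fun k => (s (k + N))⁻¹ • (f (0 + s (k + N)) - f 0),
    fun k => (hsN k).2, ht.mono_right nhdsWithin_le_nhds,
    hf.tendsto_slope_zero_right.comp ht, fun k => ?_⟩
  simpa [smul_inv_smul₀ (hsN k).2.ne'] using (hsN k).1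

theorem HasStrictFDerivAt.exists_curve_eventually_eq [CompleteSpace E] [NormedAddCommGroup F]
    [NormedSpace ℝ F] [FiniteDimensional ℝ F] {Φ : E → F} {A : E →L[ℝ] F}
    (hΦ : HasStrictFDerivAt Φ A x) (hA : Function.Surjective A) {w : E} (hw : A w = 0) :
    ∃ f : ℝ → E, HasDerivAt f w 0 ∧ f 0 = x ∧ ∀ᶠ τ in 𝓝 0, Φ (f τ) = Φ x := by
  have hrange : (A : E →ₗ[ℝ] F).range = ⊤ := LinearMap.range_eq_top.2 hA
  set g := hΦ.implicitFunction Φ A hrange (Φ x)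
  let wK : (A : E →ₗ[ℝ] F).ker := ⟨w, hw⟩
  have hline : HasDerivAt (fun τ : ℝ => τ • wK) wK 0 := by
    simpa using (hasDerivAt_id (0 : ℝ)).smul_const wK
  have hg : HasFDerivAt g (A : E →ₗ[ℝ] F).ker.subtypeL ((0 : ℝ) • wK) := by
    simpa using (hΦ.to_implicitFunction hrange).hasFDerivAt
  have hpath : Tendsto (fun τ : ℝ => (Φ x, τ • wK)) (𝓝 0) (𝓝 (Φ x, 0)) :=
    (continuous_const.prodMk (continuous_id.smul continuous_const)).tendsto' 0 _ (by simp)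
  refine ⟨fun τ => g (τ • wK), hg.comp_hasDerivAt (f := fun τ : ℝ => τ • wK) 0 hline,
    ?_, hpath.eventually (hΦ.map_implicitFunction_eq hrange)⟩
  change g ((0 : ℝ) • wK) = x
  rw [zero_smul]
  exact hΦ.implicitFunction_apply_image hrange

theorem ker_subset_tanCone_s7 [CompleteSpace E] [NormedAddCommGroup F] [NormedSpace ℝ F]
    [FiniteDimensional ℝ F] {Φ : E → F} {A : E →L[ℝ] F} (hΦ : HasStrictFDerivAt Φ A x)
    (hA : Function.Surjective A) (hC : ∀ᶠ y in 𝓝 x, Φ y = Φ x → y ∈ C) :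
    ((A : E →ₗ[ℝ] F).ker : Set E) ⊆ tanCone C x := by
  intro w hw
  obtain ⟨f, hf, hf0, hfΦ⟩ := hΦ.exists_curve_eventually_eq hA hw
  have hfx : Tendsto f (𝓝 0) (𝓝 x) := hf0 ▸ hf.continuousAt.tendsto
  rw [← hf0]
  refine mem_tanCone_of_hasDerivAt hf (Eventually.filter_mono nhdsWithin_le_nhds ?_)
  filter_upwards [hfΦ, hfx.eventually hC] with τ hτΦ hτC using hτC hτΦ

end TangentCone

theorem eventually_surjective_of_continuousAt {T G H : Type*} [TopologicalSpace T]
    [NormedAddCommGroup G] [NormedSpace ℝ G] [NormedAddCommGroup H] [NormedSpace ℝ H]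
    [FiniteDimensional ℝ H] {L : T → G →L[ℝ] H} {t₀ : T} (hL : ContinuousAt L t₀)
    (h : Function.Surjective (L t₀)) : ∀ᶠ t in 𝓝 t₀, Function.Surjective (L t) := by
  obtain ⟨B, hB⟩ := (L t₀).exists_rightInverse_of_surjective (LinearMap.range_eq_top.2 h)
  have hunit : ∀ᶠ t in 𝓝 t₀, IsUnit ((L t).comp B) :=
    (hL.clm_comp continuousAt_const).eventually
      (Units.isOpen.mem_nhds (show IsUnit ((L t₀).comp B) by rw [hB]; exact isUnit_one))
  filter_upwards [hunit] with t ht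
  have hcomp := (ContinuousLinearMap.isUnit_iff_bijective.1 ht).2
  rw [ContinuousLinearMap.coe_comp] at hcomp
  exact hcomp.of_comp

namespace IsSmoothMfdChart

variable {n c : ℕ} {X : Set (Euc n)} {xb : Euc n} {O : Set (Euc n)}
  {Φ : Euc n → Euc c} {Φ' : Euc n → (Euc n →L[ℝ] Euc c)}

theorem mem_iff (hch : IsSmoothMfdChart X xb O Φ Φ') {x : Euc n} (hxO : x ∈ O) :
    x ∈ X ↔ Φ x = 0 := by
  have h := congrArg (x ∈ ·) hch.2.2.1
  simpa [hxO] using h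

theorem hasStrictFDerivAt (hch : IsSmoothMfdChart X xb O Φ Φ') {x : Euc n} (hxO : x ∈ O) :
    HasStrictFDerivAt Φ (Φ' x) x :=
  hasStrictFDerivAt_of_hasFDerivAt_of_continuousAt
    (eventually_of_mem (hch.1.mem_nhds hxO) hch.2.2.2.1)
    (hch.2.2.2.2.1.continuousAt (hch.1.mem_nhds hxO))

theorem exists_ball (hch : IsSmoothMfdChart X xb O Φ Φ') :
    ∃ r > 0, IsSmoothMfdChart X xb (ball xb r) Φ Φ' ∧
      ∀ x ∈ ball xb r, Function.Surjective (Φ' x) := by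
  obtain ⟨hO, hxbO, -, hΦ, hΦ', hsurj⟩ := id hch
  have hsurj_near := eventually_surjective_of_continuousAt
    (hΦ'.continuousAt (hO.mem_nhds hxbO)) hsurj
  obtain ⟨r, hr, hball⟩ :=
    Metric.eventually_nhds_iff_ball.1 ((hO.eventually_mem hxbO).and hsurj_near)
  have hsub : ball xb r ⊆ O := fun x hx => (hball x hx).1
  refine ⟨r, hr, ⟨isOpen_ball, mem_ball_self hr, ?_, fun x hx => hΦ x (hsub hx),
    hΦ'.mono hsub, hsurj⟩, fun x hx => (hball x hx).2⟩
  ext x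
  simp only [mem_inter_iff, mem_ofPred_eq]
  exact ⟨fun ⟨hxX, hx⟩ => ⟨hx, (hch.mem_iff (hsub hx)).1 hxX⟩,
    fun ⟨hx, hΦx⟩ => ⟨(hch.mem_iff (hsub hx)).2 hΦx, hx⟩⟩

theorem tanCone_eq_ker (hch : IsSmoothMfdChart X xb O Φ Φ') {x : Euc n} (hxX : x ∈ X)
    (hxO : x ∈ O) (hsurj : Function.Surjective (Φ' x)) :
    tanCone X x = ((Φ' x : Euc n →ₗ[ℝ] Euc c).ker : Set (Euc n)) := by
  have hΦx : Φ x = 0 := (hch.mem_iff hxO).1 hxX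
  have hnear : ∀ᶠ y in 𝓝 x, y ∈ X ↔ Φ y = Φ x := by
    filter_upwards [hch.1.eventually_mem hxO] with y hyO
    rw [hΦx, hch.mem_iff hyO]
  exact (tanCone_subset_ker_s7 (hch.2.2.2.1 x hxO) (hnear.mono fun y hy => hy.1)).antisymm
    (ker_subset_tanCone_s7 (hch.hasStrictFDerivAt hxO) hsurj (hnear.mono fun y hy => hy.2))

end IsSmoothMfdChart

section NormalCone

variable {G : Type*} [NormedAddCommGroup E] [InnerProductSpace ℝ E] [NormedAddCommGroup F]
  [InnerProductSpace ℝ F] {D : Set (E × F)} {z : E × F}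

theorem mem_fNormal2_iff_eventually {v : E × F} :
    v ∈ fNormal2 D z ↔ z ∈ D ∧ ∀ ε > 0, ∀ᶠ z' in 𝓝 z, z' ∈ D →
      (inner ℝ v.1 (z'.1 - z.1) : ℝ) + inner ℝ v.2 (z'.2 - z.2) ≤ ε * ‖z' - z‖ := by
  simp only [fNormal2, Metric.eventually_nhds_iff, dist_eq_norm, mem_ofPred_eq]
  exact and_congr_right fun _ => forall₂_congr fun _ _ => exists_congr fun _ =>
    and_congr_right fun _ => forall_congr' fun _ => imp.swap

theorem add_mem_fNormal2 {p q : E × F} (hp : p ∈ fNormal2 D z) (hq : q ∈ fNormal2 D z) :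
    p + q ∈ fNormal2 D z := by
  rw [mem_fNormal2_iff_eventually] at *
  refine ⟨hp.1, fun ε hε => ?_⟩
  filter_upwards [hp.2 (ε / 2) (half_pos hε), hq.2 (ε / 2) (half_pos hε)] with z' h₁ h₂ hz'
  simp only [Prod.fst_add, Prod.snd_add, inner_add_left]
  linarith [h₁ hz', h₂ hz']

theorem adjoint_mem_fNormal2 [NormedAddCommGroup G] [InnerProductSpace ℝ G] [CompleteSpace E]
    [CompleteSpace G] {Φ : E → G} {A : E →L[ℝ] G} (hz : z ∈ D) (hΦ : HasFDerivAt Φ A z.1)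
    (hD : ∀ᶠ z' in 𝓝 z, z' ∈ D → Φ z'.1 = Φ z.1) (y : G) :
    (ContinuousLinearMap.adjoint A y, (0 : F)) ∈ fNormal2 D z := by
  rw [mem_fNormal2_iff_eventually]
  refine ⟨hz, fun ε hε => ?_⟩
  have hrem : (fun z' : E × F => (inner ℝ y (Φ z'.1 - Φ z.1 - A (z'.1 - z.1)) : ℝ))
      =o[𝓝 z] fun z' => z' - z :=
    ((innerSL ℝ y).isBigO_comp _ _).trans_isLittleO
      ((hΦ.isLittleO.comp_tendsto (continuous_fst.tendsto z)).trans_isBigO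
        (Asymptotics.isBigO_of_le _ fun z' => by simpa using norm_fst_le (z' - z)))
  filter_upwards [hrem.bound hε, hD] with z' hbound hz'D hz'
  have hlin : (inner ℝ y (A (z'.1 - z.1)) : ℝ)
      = -inner ℝ y (Φ z'.1 - Φ z.1 - A (z'.1 - z.1)) := by
    rw [hz'D hz', sub_self, zero_sub, inner_neg_right, neg_neg]
  rw [inner_zero_left, add_zero, ContinuousLinearMap.adjoint_inner_left, hlin]
  exact (neg_le_abs _).trans (by simpa [Real.norm_eq_abs] using hbound)

theorem mem_lNormal2_iff {v : E × F} :
    v ∈ lNormal2 D z ↔ z ∈ D ∧ (z, v) ∈ closure (gph (fNormal2 D)) := by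
  rw [mem_closure_iff_seq_limit]
  constructor
  · rintro ⟨hz, zk, vk, hvk, hzk, hvk'⟩
    exact ⟨hz, fun k => (zk k, vk k), hvk, hzk.prodMk_nhds hvk'⟩
  · rintro ⟨hz, p, hp, hlim⟩
    exact ⟨hz, fun k => (p k).1, fun k => (p k).2, hp,
      (continuous_fst.tendsto _).comp hlim, (continuous_snd.tendsto _).comp hlim⟩

theorem mem_lNormal2_of_tendsto {ι : Type*} {l : Filter ι} [l.NeBot] {ζ ν : ι → E × F}
    {v : E × F} (hz : z ∈ D) (hζ : Tendsto ζ l (𝓝 z)) (hν : Tendsto ν l (𝓝 v))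
    (h : ∀ᶠ k in l, ν k ∈ lNormal2 D (ζ k)) : v ∈ lNormal2 D z :=
  mem_lNormal2_iff.2 ⟨hz, isClosed_closure.mem_of_tendsto (hζ.prodMk_nhds hν)
    (h.mono fun _ hk => (mem_lNormal2_iff.1 hk).2)⟩

theorem add_mem_lNormal2 {a : E × F → E × F} {v : E × F} (hv : v ∈ lNormal2 D z)
    (ha : ContinuousAt a z) (haD : ∀ᶠ z' in 𝓝 z, z' ∈ D → a z' ∈ fNormal2 D z') :
    v + a z ∈ lNormal2 D z := by
  obtain ⟨hz, hcl⟩ := mem_lNormal2_iff.1 hv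
  refine mem_lNormal2_iff.2 ⟨hz, ?_⟩
  have hshift : Tendsto (fun p : (E × F) × (E × F) => (p.1, p.2 + a p.1))
      (𝓝 (z, v)) (𝓝 (z, v + a z)) :=
    (continuousAt_fst.prodMk (continuousAt_snd.add (ha.comp continuousAt_fst))).tendsto
  rw [mem_closure_iff_frequently] at hcl ⊢
  refine hshift.frequently (hcl.mp ?_)
  filter_upwards [(continuous_fst.tendsto (z, v)).eventually haD] with p hp hpN
  exact add_mem_fNormal2 hpN (hp hpN.1)

end NormalCone

namespace IsSmoothMfdChart

variable {n c : ℕ} {X : Set (Euc n)} {xb : Euc n} {O : Set (Euc n)}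
  {Φ : Euc n → Euc c} {Φ' : Euc n → (Euc n →L[ℝ] Euc c)}

theorem add_adjoint_mem_lNormal2 [NormedAddCommGroup F] [InnerProductSpace ℝ F]
    (hch : IsSmoothMfdChart X xb O Φ Φ') {D : Set (Euc n × F)} (hDX : ∀ z ∈ D, z.1 ∈ X)
    {z v : Euc n × F} (hzO : z.1 ∈ O) (hv : v ∈ lNormal2 D z) (y : Euc c) :
    v + (ContinuousLinearMap.adjoint (Φ' z.1) y, 0) ∈ lNormal2 D z := by
  obtain ⟨hO, -, -, hΦ, hΦ', -⟩ := id hch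
  have hnearO : ∀ {z' : Euc n × F}, z'.1 ∈ O → ∀ᶠ z'' in 𝓝 z', z''.1 ∈ O := fun h =>
    (continuous_fst.tendsto _).eventually (hO.eventually_mem h)
  refine add_mem_lNormal2 (a := fun z' => (ContinuousLinearMap.adjoint (Φ' z'.1) y, 0)) hv ?_ ?_
  · have hadj : ContinuousAt (fun x => ContinuousLinearMap.adjoint (Φ' x)) z.1 :=
      ContinuousLinearMap.adjoint.continuous.continuousAt.comp
        (hΦ'.continuousAt (hO.mem_nhds hzO))
    exact ((hadj.comp continuousAt_fst).clm_apply continuousAt_const).prodMk continuousAt_const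
  · filter_upwards [hnearO hzO] with z' hz'O hz'D
    refine adjoint_mem_fNormal2 hz'D (hΦ _ hz'O) ?_ y
    filter_upwards [hnearO hz'O] with z'' hz''O hz''D
    rw [(hch.mem_iff hz''O).1 (hDX _ hz''D), (hch.mem_iff hz'O).1 (hDX _ hz'D)]

variable {m : ℕ} {S : Euc n → Set (Euc m)}

theorem projNormal_subset (hch : IsSmoothMfdChart X xb O Φ Φ')
    (hsurj : ∀ x ∈ O, Function.Surjective (Φ' x)) {z : Euc n × Euc m}
    (hz : z ∈ gph (restr S X)) (hzO : z.1 ∈ O) :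
    projNormal S X z ⊆ {q | q ∈ lNormal2 (gph (restr S X)) z ∧ Φ' z.1 q.1 = 0} := by
  rintro ⟨t, w⟩ ⟨v, hv, ht⟩
  rw [hch.tanCone_eq_ker hz.2 hzO (hsurj _ hzO)] at ht
  obtain ⟨y, rfl⟩ := exists_eq_add_adjoint_of_mem_projSet_ker ht
  refine ⟨?_, ht.1⟩
  simpa using hch.add_adjoint_mem_lNormal2 (fun z' hz' => hz'.2) hzO hv y

theorem projCoderiv_subset (hch : IsSmoothMfdChart X xb O Φ Φ')
    (hsurj : ∀ x ∈ O, Function.Surjective (Φ' x)) {x : Euc n} {u : Euc m}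
    (hz : (x, u) ∈ gph (restr S X)) (hxO : x ∈ O) (us : Euc m) :
    projCoderiv S X x u us ⊆ coderiv (restr S X) x u us ∩ tanCone X x := by
  rintro t ⟨zk, qk, hzk, hqk, hzlim, hqlim⟩
  have hxk : Tendsto (fun k => (zk k).1) atTop (𝓝 x) := (continuous_fst.tendsto _).comp hzlim
  have hnear : ∀ᶠ k in atTop,
      qk k ∈ lNormal2 (gph (restr S X)) (zk k) ∧ Φ' (zk k).1 (qk k).1 = 0 := by
    filter_upwards [hxk.eventually (hch.1.eventually_mem hxO)] with k hk
    exact hch.projNormal_subset hsurj (hzk k) hk (hqk k)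
  refine ⟨mem_lNormal2_of_tendsto hz hzlim hqlim (hnear.mono fun _ hk => hk.1), ?_⟩
  rw [hch.tanCone_eq_ker hz.2 hxO (hsurj x hxO)]
  have hΦ'k : Tendsto (fun k => Φ' (zk k).1) atTop (𝓝 (Φ' x)) :=
    (hch.2.2.2.2.1.continuousAt (hch.1.mem_nhds hxO)).tendsto.comp hxk
  have happly : Tendsto (fun k => Φ' (zk k).1 (qk k).1) atTop (𝓝 (Φ' x t)) :=
    (isBoundedBilinearMap_apply.continuous.tendsto _).comp
      (hΦ'k.prodMk_nhds ((continuous_fst.tendsto _).comp hqlim))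
  exact tendsto_nhds_unique_of_eventuallyEq happly tendsto_const_nhds
    (hnear.mono fun _ hk => hk.2)

end IsSmoothMfdChart

theorem mem_projCoderiv_of_mem_projSet {n m : ℕ} {S : Euc n → Set (Euc m)} {X : Set (Euc n)}
    {x : Euc n} {u us : Euc m} {v t : Euc n} (hz : (x, u) ∈ gph (restr S X))
    (hv : v ∈ coderiv (restr S X) x u us) (ht : t ∈ projSet (tanCone X x) v) :
    t ∈ projCoderiv S X x u us :=
  ⟨fun _ => (x, u), fun _ => (t, -us), fun _ => hz, fun _ => ⟨v, hv, ht⟩,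
    tendsto_const_nhds, tendsto_const_nhds⟩

theorem stmt7_general {n m : ℕ} (S : Euc n → Set (Euc m)) (X : Set (Euc n))
    (xb : Euc n) (ub : Euc m) (hX : SmoothManifoldAround X xb) :
    ∃ δ > 0, ∀ z ∈ gph (restr S X), dist z (xb, ub) < δ → ∀ us : Euc m,
      projCoderiv S X z.1 z.2 us =
        {t : Euc n | ∃ v ∈ coderiv (restr S X) z.1 z.2 us, t ∈ projSet (tanCone X z.1) v} ∧
      projCoderiv S X z.1 z.2 us = coderiv (restr S X) z.1 z.2 us ∩ tanCone X z.1 := by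
  obtain ⟨c, O, Φ, Φ', hch⟩ := hX
  obtain ⟨r, hr, hball, hsurj⟩ := hch.exists_ball
  refine ⟨r, hr, fun z hz hzr us => ?_⟩
  have hzO : z.1 ∈ ball xb r := (le_max_left _ _).trans_lt hzr
  have hsub := hball.projCoderiv_subset hsurj hz hzO us
  have hproj : {t | ∃ v ∈ coderiv (restr S X) z.1 z.2 us, t ∈ projSet (tanCone X z.1) v} ⊆
      projCoderiv S X z.1 z.2 us :=
    fun _ ⟨_, hv, ht⟩ => mem_projCoderiv_of_mem_projSet hz hv ht
  have htan : coderiv (restr S X) z.1 z.2 us ∩ tanCone X z.1 ⊆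
      {t | ∃ v ∈ coderiv (restr S X) z.1 z.2 us, t ∈ projSet (tanCone X z.1) v} :=
    fun t ht => ⟨t, ht.1, mem_projSet_self ht.2⟩
  exact ⟨(hsub.trans htan).antisymm hproj, hsub.antisymm (htan.trans hproj)⟩

/-- For a smooth manifold `X`, near the reference point the
projectional coderivative equals both the projection of the restricted
coderivative and its intersection with the tangent space. -/
theorem stmt7 {n m : ℕ} (S : Euc n → Set (Euc m)) (X : Set (Euc n))
    (xb : Euc n) (ub : Euc m) (hX : SmoothManifoldAround X xb)
    (hxb : xb ∈ X) (hub : ub ∈ S xb)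
    (hcl : LocallyClosedAt (gph S) (xb, ub)) :
    ∃ δ > 0, ∀ z ∈ gph (restr S X), dist z (xb, ub) < δ → ∀ us : Euc m,
      projCoderiv S X z.1 z.2 us =
        {t : Euc n | ∃ v ∈ coderiv (restr S X) z.1 z.2 us, t ∈ projSet (tanCone X z.1) v} ∧
      projCoderiv S X z.1 z.2 us = coderiv (restr S X) z.1 z.2 us ∩ tanCone X z.1 :=
  stmt7_general S X xb ub hX
end
end

section
/- Let S : ℝⁿ ⇉ ℝᵐ, X a smooth manifold around x̄ ∈ X, ū ∈ S(x̄), gph S locally closed at (x̄,ū). If S has the Lipschitz-like property relative to X at x̄ for ū with constant κ ≥ 0, then for all (x,u) ∈ gph S|_X sufficiently close to (x̄,ū) and all u*, every x* ∈ D̂*S|_X(x|u)(u*) satisfies ‖proj_{T_X(x)}(x*)‖ ≤ κ‖u*‖. -/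
open Filter Topology Set Metric
open scoped ENNReal NNReal

noncomputable section

variable {E F : Type*}

/-!
A tangent direction `w` to `X` at `x` lifts, through the Lipschitz-like estimate, to points
`(x + t w', u')` of the graph with `‖u' - u‖ ≤ κ t ‖w'‖`; testing the Fréchet normal `(x*, -u*)`
against these points gives `⟪x*, w⟫ ≤ κ ‖u*‖ ‖w‖` on the whole tangent cone. The tangent cone is a
cone, so the nearest point `t` to `x*` in it satisfies `‖t‖² ≤ ⟪x*, t⟫`, and therefore `‖t‖ ≤ κ ‖u*‖`.
-/

open scoped InnerProductSpace

lemma smul_mem_tanCone [NormedAddCommGroup E] [NormedSpace ℝ E]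
    {C : Set E} {x w : E} {l : ℝ} (hl : 0 < l) (hw : w ∈ tanCone C x) :
    l • w ∈ tanCone C x := by
  obtain ⟨t, w', ht, ht0, hw', hmem⟩ := hw
  refine ⟨fun k => t k / l, fun k => l • w' k, fun k => div_pos (ht k) hl,
    by simpa using ht0.div_const l, hw'.const_smul l, fun k => ?_⟩
  rw [smul_smul, div_mul_cancel₀ _ hl.ne']
  exact hmem k

section InnerProductSpace

variable [NormedAddCommGroup E] [InnerProductSpace ℝ E] [NormedAddCommGroup F]
  [InnerProductSpace ℝ F]

/-- Compare `t` with the competitors `l • t`, `0 < l < 1`, and let `l → 1`. -/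
lemma norm_sq_le_inner_of_mem_projSet {K : Set E} (hK : ∀ l : ℝ, 0 < l → ∀ w ∈ K, l • w ∈ K)
    {v t : E} (ht : t ∈ projSet K v) : ‖t‖ ^ 2 ≤ ⟪v, t⟫_ℝ := by
  obtain ⟨htK, hdist⟩ := ht
  have hscale : ∀ l ∈ Ioo (0 : ℝ) 1, (1 + l) * ‖t‖ ^ 2 ≤ 2 * ⟪v, t⟫_ℝ := by
    rintro l ⟨hl0, hl1⟩
    have hle : ‖v - t‖ ≤ ‖v - l • t‖ := by
      rw [hdist, ← dist_eq_norm]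
      exact infDist_le_dist_of_mem (hK l hl0 t htK)
    have hsq := pow_le_pow_left₀ (norm_nonneg _) hle 2
    rw [norm_sub_sq_real, norm_sub_sq_real, real_inner_smul_right, norm_smul,
      Real.norm_eq_abs, abs_of_pos hl0] at hsq
    nlinarith
  have hlim : Tendsto (fun l : ℝ => (1 + l) * ‖t‖ ^ 2) (𝓝[<] 1) (𝓝 ((1 + 1) * ‖t‖ ^ 2)) :=
    tendsto_nhdsWithin_of_tendsto_nhds (((continuous_const_add 1).tendsto 1).mul_const _)
  have := le_of_tendsto hlim (eventually_of_mem (Ioo_mem_nhdsLT zero_lt_one) hscale)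
  linarith

lemma eventually_inner_le_of_mem_fNormal2 {D : Set (E × F)} {z v : E × F}
    (hv : v ∈ fNormal2 D z) (C : ℝ) {ε : ℝ} (hε : 0 < ε) :
    ∀ᶠ s in 𝓝[>] (0 : ℝ), ∀ q : E × F, z + s • q ∈ D → ‖q‖ ≤ C →
      ⟪v.1, q.1⟫_ℝ + ⟪v.2, q.2⟫_ℝ ≤ ε := by
  have hC : 0 < |C| + 1 := by positivity
  obtain ⟨δ, hδ, hfr⟩ := hv.2 (ε / (|C| + 1)) (div_pos hε hC)
  filter_upwards [Ioo_mem_nhdsGT (div_pos hδ hC)] with s ⟨hs0, hsδ⟩ q hq hqC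
  have hqC' : ‖q‖ ≤ |C| + 1 := by linarith [le_abs_self C]
  have hnorm : ‖s • q‖ = s * ‖q‖ := by rw [norm_smul, Real.norm_of_nonneg hs0.le]
  have hnear : ‖z + s • q - z‖ < δ := by
    rw [add_sub_cancel_left, hnorm]
    calc s * ‖q‖ ≤ s * (|C| + 1) := by gcongr
      _ < δ := (lt_div_iff₀ hC).mp hsδ
  have h := hfr _ hq hnear
  simp only [Prod.fst_add, Prod.snd_add, Prod.smul_fst, Prod.smul_snd, add_sub_cancel_left,
    real_inner_smul_right, hnorm] at h
  have hbound : ε / (|C| + 1) * (s * ‖q‖) ≤ s * ε := by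
    calc ε / (|C| + 1) * (s * ‖q‖) ≤ ε / (|C| + 1) * (s * (|C| + 1)) := by gcongr
      _ = s * ε := by field_simp
  exact le_of_mul_le_mul_left (by linarith) hs0

lemma inner_le_of_mem_fCoderiv_restr {S : E → Set F} {X : Set E} {x : E} {u : F} {κ : ℝ} {V : Set E}
    (hV : V ∈ 𝓝 x) (hL : ∀ x' ∈ X ∩ V, ∃ u' ∈ S x', ‖u - u'‖ ≤ κ * ‖x - x'‖)
    {us : F} {xs : E} (hxs : xs ∈ fCoderiv (restr S X) x u us) {w : E} (hw : w ∈ tanCone X x) :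
    ⟪xs, w⟫_ℝ ≤ κ * ‖us‖ * ‖w‖ := by
  obtain ⟨t, w', ht, ht0, hw', hmem⟩ := hw
  have ht0' : Tendsto t atTop (𝓝[>] 0) :=
    tendsto_nhdsWithin_iff.mpr ⟨ht0, Eventually.of_forall ht⟩
  have hpt : Tendsto (fun k => x + t k • w' k) atTop (𝓝 x) := by
    simpa using tendsto_const_nhds.add (ht0.smul hw')
  have hbdd : ∀ᶠ k in atTop, ‖w' k‖ ≤ ‖w‖ + 1 :=
    hw'.norm.eventually (gt_mem_nhds (lt_add_one _)) |>.mono fun _ => le_of_lt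
  have hlift : ∀ᶠ k in atTop, ∃ q : F, ‖q‖ ≤ κ * ‖w' k‖ ∧
      (x, u) + t k • (w' k, q) ∈ gph (restr S X) := by
    filter_upwards [hpt.eventually hV] with k hkV
    obtain ⟨u', hu', hdist⟩ := hL _ ⟨hmem k, hkV⟩
    rw [sub_add_cancel_left, norm_neg, norm_smul, Real.norm_of_nonneg (ht k).le] at hdist
    refine ⟨(t k)⁻¹ • (u' - u), ?_, ?_⟩
    · rw [norm_smul, norm_inv, Real.norm_of_nonneg (ht k).le, norm_sub_rev, inv_mul_le_iff₀ (ht k)]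
      linarith
    · simpa [gph, restr, smul_smul, mul_inv_cancel₀ (ht k).ne'] using ⟨hu', hmem k⟩
  refine le_of_forall_pos_le_add fun ε hε => ?_
  have hnormal := eventually_inner_le_of_mem_fNormal2 hxs ((1 + |κ|) * (‖w‖ + 1)) hε
  have hev : ∀ᶠ k in atTop, ⟪xs, w' k⟫_ℝ ≤ κ * ‖us‖ * ‖w' k‖ + ε := by
    filter_upwards [ht0'.eventually hnormal, hlift, hbdd] with k hk ⟨q, hq, hkD⟩ hkw
    have hqC : ‖(w' k, q)‖ ≤ (1 + |κ|) * (‖w‖ + 1) := by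
      rw [Prod.norm_def, max_le_iff]
      constructor <;> nlinarith [le_abs_self κ, abs_nonneg κ, norm_nonneg (w' k)]
    have hus : ⟪us, q⟫_ℝ ≤ ‖us‖ * (κ * ‖w' k‖) :=
      (real_inner_le_norm _ _).trans (mul_le_mul_of_nonneg_left hq (norm_nonneg _))
    have := hk _ hkD hqC
    simp only [inner_neg_left] at this
    linarith
  exact le_of_tendsto_of_tendsto (tendsto_const_nhds.inner hw')
    ((hw'.norm.const_mul _).add_const ε) hev

end InnerProductSpace

theorem stmt10_general {n m : ℕ} (S : Euc n → Set (Euc m)) (X : Set (Euc n))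
    (xb : Euc n) (ub : Euc m)
    (κ : ℝ) (hκ : 0 ≤ κ) (hlip : LipschitzLikeRel S X xb ub κ) :
    ∃ δ > 0, ∀ z ∈ gph (restr S X), dist z (xb, ub) < δ →
      ∀ (us : Euc m) (xs : Euc n), xs ∈ fCoderiv (restr S X) z.1 z.2 us →
        ∀ t ∈ projSet (tanCone X z.1) xs, ‖t‖ ≤ κ * ‖us‖ := by
  obtain ⟨-, V, hV, W, hW, hL⟩ := hlip
  obtain ⟨rV, hrV, hVb⟩ := Metric.mem_nhds_iff.mp hV
  obtain ⟨rW, hrW, hWb⟩ := Metric.mem_nhds_iff.mp hW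
  refine ⟨min rV rW, lt_min hrV hrW, ?_⟩
  rintro ⟨x, u⟩ ⟨hu, hxX⟩ hdist us xs hxs t ht
  rw [Prod.dist_eq, max_lt_iff, lt_min_iff, lt_min_iff] at hdist
  have hxV : x ∈ V := hVb hdist.1.1
  have hVx : V ∈ 𝓝 x := mem_of_superset (isOpen_ball.mem_nhds hdist.1.1) hVb
  have hinner : ⟪xs, t⟫_ℝ ≤ κ * ‖us‖ * ‖t‖ :=
    inner_le_of_mem_fCoderiv_restr hVx
      (fun x' hx' => hL x' hx' x ⟨hxX, hxV⟩ u ⟨hu, hWb hdist.2.2⟩) hxs ht.1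
  have hproj := norm_sq_le_inner_of_mem_projSet (fun l hl w hw => smul_mem_tanCone hl hw) ht
  have hκus : 0 ≤ κ * ‖us‖ := by positivity
  nlinarith [norm_nonneg t]

/-- Necessity: if `S` has the Lipschitz-like property relative
to the smooth manifold `X` at `xb` for `ub` with constant `κ`, then for all
`(x,u) ∈ gph S|_X` near `(xb,ub)`, every Fréchet coderivative element satisfies
`‖proj_{T_X(x)}(x*)‖ ≤ κ‖u*‖`. -/
theorem stmt10 {n m : ℕ} (S : Euc n → Set (Euc m)) (X : Set (Euc n))
    (xb : Euc n) (ub : Euc m) (hX : SmoothManifoldAround X xb)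
    (hxb : xb ∈ X) (hub : ub ∈ S xb)
    (hcl : LocallyClosedAt (gph S) (xb, ub))
    (κ : ℝ) (hκ : 0 ≤ κ) (hlip : LipschitzLikeRel S X xb ub κ) :
    ∃ δ > 0, ∀ z ∈ gph (restr S X), dist z (xb, ub) < δ →
      ∀ (us : Euc m) (xs : Euc n), xs ∈ fCoderiv (restr S X) z.1 z.2 us →
        ∀ t ∈ projSet (tanCone X z.1) xs, ‖t‖ ≤ κ * ‖us‖ :=
  stmt10_general S X xb ub κ hκ hlip
end
end

section
/- Let X ⊆ ℝⁿ be closed and F : ℝⁿ → ℝᵐ be strictly continuous (locally Lipschitz) at x̄ relative to X. Then for every z ∈ ℝᵐ, the Fréchet coderivative of the restriction equals the Fréchet subdifferential of the scalarization: D̂*F|_X(x̄)(z) = ∂̂(zF|_X)(x̄), and the limiting coderivative equals the limiting subdifferential: D*F|_X(x̄)(z) = ∂(zF|_X)(x̄). -/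
open Filter Topology Set Metric
open scoped ENNReal NNReal

noncomputable section

variable {E F : Type*}

/-- Fréchet subdifferential of the scalarization `x ↦ f(x) + δ_X(x)` at `xb`. -/
def fSubdiffOn {E : Type*} [NormedAddCommGroup E] [InnerProductSpace ℝ E]
    (f : E → ℝ) (X : Set E) (xb : E) : Set E :=
  {v | xb ∈ X ∧ ∀ ε > 0, ∃ δ > 0, ∀ x ∈ X, ‖x - xb‖ < δ →
      f xb + (inner ℝ v (x - xb) : ℝ) - ε * ‖x - xb‖ ≤ f x}

/-- Limiting subdifferential of the scalarization `x ↦ f(x) + δ_X(x)` at `xb`. -/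
def lSubdiffOn {E : Type*} [NormedAddCommGroup E] [InnerProductSpace ℝ E]
    (f : E → ℝ) (X : Set E) (xb : E) : Set E :=
  {v | xb ∈ X ∧ ∃ xk vk : ℕ → E,
      (∀ k, vk k ∈ fSubdiffOn f X (xk k)) ∧ Tendsto xk atTop (𝓝 xb) ∧
      Tendsto (fun k => f (xk k)) atTop (𝓝 (f xb)) ∧ Tendsto vk atTop (𝓝 v)}

/-- `f` is strictly continuous (locally Lipschitz) at `xb` relative to `X`. -/
def StrictlyContinuousRelAt {E F : Type*} [NormedAddCommGroup E] [NormedAddCommGroup F]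
    (f : E → F) (X : Set E) (xb : E) : Prop :=
  ∃ K : ℝ, ∃ δ > 0, ∀ x ∈ X, ∀ x' ∈ X, ‖x - xb‖ < δ → ‖x' - xb‖ < δ →
    ‖f x - f x'‖ ≤ K * ‖x - x'‖


/-!
A Fréchet normal `(a, b)` to the graph of `f|_X` at `(x, f x)` makes `a` a Fréchet subgradient
of `⟪z, f⟫ + δ_X` at `x` up to the error `K ‖b + z‖ ‖· - x‖`, where `K` is a local Lipschitz
constant of `f` on `X`; for `b = -z` this is the Fréchet identity. For limiting normals the
errors `K ‖b_k + z‖` tend to zero, and each one is removed by minimising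
`⟪z, f⟫ - ⟪a, · - x⟫ + μ ‖· - x‖²` over a compact neighbourhood of `x` in the closed set `X`:
the minimiser is close to `x`, and at it the gradient of the penalty is an exact Fréchet
subgradient close to `a`.
-/

open scoped RealInnerProductSpace

section Scalarization

variable [NormedAddCommGroup E] [InnerProductSpace ℝ E] {X : Set E} {g : E → ℝ} {x₀ : E}

theorem mem_fSubdiffOn_iff {v : E} :
    v ∈ fSubdiffOn g X x₀ ↔
      x₀ ∈ X ∧ ∀ ε > 0, ∀ᶠ x in 𝓝[X] x₀, g x₀ + ⟪v, x - x₀⟫ - ε * ‖x - x₀‖ ≤ g x := by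
  simp only [fSubdiffOn, mem_ofPred_eq, eventually_nhdsWithin_iff, Metric.eventually_nhds_iff,
    dist_eq_norm]
  exact and_congr_right fun _ => forall₂_congr fun ε _ => exists_congr fun δ =>
    and_congr_right fun _ => ⟨fun h x hx hxX => h x hxX hx, fun h x hxX hx => h hx hxX⟩

theorem mem_fSubdiffOn_of_isLocalMinOn_sub {h : E → ℝ} {w x : E} (hx : x ∈ X)
    (hmin : IsLocalMinOn (fun y => g y - h y) X x) (hh : HasFDerivAt h (innerSL ℝ w) x) :
    w ∈ fSubdiffOn g X x := by
  refine mem_fSubdiffOn_iff.2 ⟨hx, fun ε hε => ?_⟩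
  filter_upwards [hmin, nhdsWithin_le_nhds (hh.isLittleO.bound hε)] with y hmin_y hh_y
  rw [innerSL_apply_apply, Real.norm_eq_abs, abs_le] at hh_y
  linarith [hh_y.1, hmin_y]

theorem hasFDerivAt_inner_sub_sq_norm_sub (a x₀ x : E) (μ : ℝ) :
    HasFDerivAt (fun y => ⟪a, y - x₀⟫ - μ * ‖y - x₀‖ ^ 2)
      (innerSL ℝ (a - (2 * μ : ℝ) • (x - x₀))) x := by
  have hsub := (hasFDerivAt_id (𝕜 := ℝ) x).sub_const x₀
  refine (((innerSL ℝ a).hasFDerivAt.comp x hsub).sub (hsub.norm_sq.const_mul μ)).congr_fderiv ?_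
  ext y
  simp only [ContinuousLinearMap.comp_id, id_eq, map_sub, sub_apply, coe_innerSL_apply, smul_apply,
    nsmul_eq_mul, Nat.cast_ofNat, smul_eq_mul, map_smul, sub_right_inj]
  ring

theorem exists_mem_fSubdiffOn_near_of_forall_le [ProperSpace E] (hX : IsClosed X) {a : E}
    {c ρ : ℝ} (hc : 0 < c) (hρ : 0 < ρ) (hx₀ : x₀ ∈ X)
    (hg : LowerSemicontinuousOn g (X ∩ closedBall x₀ ρ))
    (ha : ∀ x ∈ X ∩ closedBall x₀ ρ, g x₀ + ⟪a, x - x₀⟫ - c * ‖x - x₀‖ ≤ g x) :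
    ∃ x, ‖x - x₀‖ ≤ ρ / 2 ∧ ∃ a' ∈ fSubdiffOn g X x, ‖a' - a‖ ≤ 2 * c := by
  set μ := 2 * c / ρ with hμ
  have hμ_pos : 0 < μ := by positivity
  set h : E → ℝ := fun y => ⟪a, y - x₀⟫ - μ * ‖y - x₀‖ ^ 2
  have hψ : LowerSemicontinuousOn (fun y => g y - h y) (X ∩ closedBall x₀ ρ) :=
    hg.add (ContinuousOn.lowerSemicontinuousOn (by fun_prop))
  obtain ⟨xh, ⟨hxhX, hxhB⟩, hmin⟩ :=
    LowerSemicontinuousOn.exists_isMinOn (s := X ∩ closedBall x₀ ρ)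
      ⟨x₀, hx₀, mem_closedBall_self hρ.le⟩ ((isCompact_closedBall x₀ ρ).inter_left hX) hψ
  have hψ_le : g xh - h xh ≤ g x₀ := by
    simpa [h] using hmin ⟨hx₀, mem_closedBall_self hρ.le⟩
  have hdist : ‖xh - x₀‖ ≤ ρ / 2 := by
    have hq : μ * ‖xh - x₀‖ ^ 2 ≤ c * ‖xh - x₀‖ := by
      simp only [h] at hψ_le
      linarith [ha xh ⟨hxhX, hxhB⟩]
    have hcμ : c / μ = ρ / 2 := by rw [hμ]; field_simp
    rw [← hcμ, le_div_iff₀ hμ_pos]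
    nlinarith [norm_nonneg (xh - x₀)]
  have hloc : IsLocalMinOn (fun y => g y - h y) X xh := by
    refine mem_of_superset (inter_mem_nhdsWithin X (closedBall_mem_nhds_of_mem ?_))
      fun y hy => hmin hy
    rw [mem_ball, dist_eq_norm]
    linarith
  refine ⟨xh, hdist, _,
    mem_fSubdiffOn_of_isLocalMinOn_sub hxhX hloc (hasFDerivAt_inner_sub_sq_norm_sub a x₀ xh μ), ?_⟩
  calc ‖a - (2 * μ) • (xh - x₀) - a‖ = 2 * μ * ‖xh - x₀‖ := by
        rw [sub_sub_cancel_left, norm_neg, norm_smul, Real.norm_of_nonneg (by positivity)]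
    _ ≤ 2 * μ * (ρ / 2) := by gcongr
    _ = 2 * c := by rw [hμ]; field_simp

theorem exists_mem_fSubdiffOn_near [ProperSpace E] (hX : IsClosed X) {a : E} {c r η : ℝ}
    (hc : 0 ≤ c) (hr : 0 < r) (hη : 0 < η) (hg : LowerSemicontinuousOn g (X ∩ closedBall x₀ r))
    (ha : a ∈ fSubdiffOn (fun x => g x + c * ‖x - x₀‖) X x₀) :
    ∃ x, ‖x - x₀‖ ≤ η ∧ ∃ a' ∈ fSubdiffOn g X x, ‖a' - a‖ ≤ 2 * c + η := by
  obtain ⟨hx₀, ha⟩ := mem_fSubdiffOn_iff.1 ha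
  obtain ⟨ρ₀, hρ₀, ha⟩ := Metric.mem_nhdsWithin_iff.1 (ha (η / 2) (half_pos hη))
  set ρ := min (min r η) (ρ₀ / 2)
  have hρ_pos : 0 < ρ := lt_min (lt_min hr hη) (half_pos hρ₀)
  have hρ_le : ρ ≤ r ∧ ρ ≤ η ∧ ρ < ρ₀ :=
    ⟨(min_le_left _ _).trans (min_le_left _ _), (min_le_left _ _).trans (min_le_right _ _),
      (min_le_right _ _).trans_lt (half_lt_self hρ₀)⟩
  have ha_ball : ∀ x ∈ X ∩ closedBall x₀ ρ,
      g x₀ + ⟪a, x - x₀⟫ - (c + η / 2) * ‖x - x₀‖ ≤ g x := by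
    intro x ⟨hxX, hxρ⟩
    rw [mem_closedBall, dist_eq_norm] at hxρ
    have hx := ha ⟨mem_ball_iff_norm.2 (by linarith [hρ_le.2.2]), hxX⟩
    simp only [mem_ofPred_eq, sub_self, norm_zero, mul_zero, add_zero] at hx
    linarith
  obtain ⟨x, hx, a', ha', ha'a⟩ := exists_mem_fSubdiffOn_near_of_forall_le hX (by positivity)
    hρ_pos hx₀ (hg.mono (inter_subset_inter_right _ (closedBall_subset_closedBall hρ_le.1)))
    ha_ball
  exact ⟨x, by linarith, a', ha', by linarith⟩

end Scalarization

theorem StrictlyContinuousRelAt.exists_lipschitzOnWith {E F : Type*} [NormedAddCommGroup E]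
    [NormedAddCommGroup F] {f : E → F} {X : Set E} {xb : E} (hf : StrictlyContinuousRelAt f X xb) :
    ∃ K : ℝ≥0, ∃ δ > 0, LipschitzOnWith K f (X ∩ ball xb δ) := by
  obtain ⟨K, δ, hδ, hK⟩ := hf
  refine ⟨K.toNNReal, δ, hδ, LipschitzOnWith.of_dist_le' fun x hx y hy => ?_⟩
  simpa only [dist_eq_norm] using
    hK x hx.1 y hy.1 (mem_ball_iff_norm.1 hx.2) (mem_ball_iff_norm.1 hy.2)

theorem LipschitzOnWith.eventually_norm_sub_le {E F : Type*} [SeminormedAddCommGroup E]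
    [SeminormedAddCommGroup F] {f : E → F} {K : ℝ≥0} {X U : Set E} {x₀ : E}
    (hf : LipschitzOnWith K f (X ∩ U)) (hU : U ∈ 𝓝 x₀) (hx₀ : x₀ ∈ X ∩ U) :
    ∀ᶠ x in 𝓝[X] x₀, ‖f x - f x₀‖ ≤ K * ‖x - x₀‖ := by
  filter_upwards [inter_mem_nhdsWithin X hU] with x hx
  exact hf.norm_sub_le hx hx₀

theorem LipschitzOnWith.continuousWithinAt_of_inter {E F : Type*} [PseudoEMetricSpace E]
    [PseudoEMetricSpace F] {f : E → F} {K : ℝ≥0} {X U : Set E} {x₀ : E}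
    (hf : LipschitzOnWith K f (X ∩ U)) (hU : U ∈ 𝓝 x₀) (hx₀ : x₀ ∈ X) :
    ContinuousWithinAt f X x₀ :=
  (continuousWithinAt_inter hU).1 (hf.continuousOn.continuousWithinAt ⟨hx₀, mem_of_mem_nhds hU⟩)

theorem mem_gph_restr_singleton {f : E → F} {X : Set E} {p : E × F} :
    p ∈ gph (restr (fun x => {f x}) X) ↔ p.2 = f p.1 ∧ p.1 ∈ X := by
  simp [gph, restr]

section Coderivative

variable [NormedAddCommGroup E] [InnerProductSpace ℝ E] [NormedAddCommGroup F]
  [InnerProductSpace ℝ F] {X : Set E} {f : E → F} {x₀ : E} {z : F}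

theorem mem_fNormal2_gph_of_mem_fSubdiffOn {v : E}
    (hv : v ∈ fSubdiffOn (fun x => ⟪z, f x⟫) X x₀) :
    (v, -z) ∈ fNormal2 (gph (restr (fun x => {f x}) X)) (x₀, f x₀) := by
  obtain ⟨hx₀, hv⟩ := hv
  refine ⟨mem_gph_restr_singleton.2 ⟨rfl, hx₀⟩, fun ε hε => ?_⟩
  obtain ⟨δ, hδ, hv⟩ := hv ε hε
  refine ⟨δ, hδ, fun p hp hpδ => ?_⟩
  obtain ⟨hp2, hp1⟩ := mem_gph_restr_singleton.1 hp
  have hp_fst : ‖p.1 - x₀‖ ≤ ‖p - (x₀, f x₀)‖ := norm_fst_le (p - (x₀, f x₀))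
  have hsub : ⟪z, f x₀⟫ + ⟪v, p.1 - x₀⟫ - ε * ‖p.1 - x₀‖ ≤ ⟪z, f p.1⟫ :=
    hv p.1 hp1 (hp_fst.trans_lt hpδ)
  show ⟪v, p.1 - x₀⟫ + ⟪-z, p.2 - f x₀⟫ ≤ ε * ‖p - (x₀, f x₀)‖
  rw [hp2, inner_neg_left, inner_sub_right z]
  linarith [mul_le_mul_of_nonneg_left hp_fst hε.le]

theorem mem_fSubdiffOn_add_of_mem_fNormal2_gph {K : ℝ} (hK : 0 ≤ K) {a : E} {b : F}
    (hf : ∀ᶠ x in 𝓝[X] x₀, ‖f x - f x₀‖ ≤ K * ‖x - x₀‖)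
    (hab : (a, b) ∈ fNormal2 (gph (restr (fun x => {f x}) X)) (x₀, f x₀)) :
    a ∈ fSubdiffOn (fun x => ⟪z, f x⟫ + K * ‖b + z‖ * ‖x - x₀‖) X x₀ := by
  obtain ⟨hmem, hab⟩ := hab
  refine mem_fSubdiffOn_iff.2 ⟨(mem_gph_restr_singleton.1 hmem).2, fun ε hε => ?_⟩
  have hK1 : 0 < 1 + K := by linarith
  obtain ⟨δ, hδ, hab⟩ := hab (ε / (1 + K)) (div_pos hε hK1)
  have hball : ∀ᶠ x in 𝓝[X] x₀, ‖x - x₀‖ < δ / (1 + K) :=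
    nhdsWithin_le_nhds <|
      mem_of_superset (ball_mem_nhds x₀ (div_pos hδ hK1)) fun x hx => mem_ball_iff_norm.1 hx
  filter_upwards [hf, hball, self_mem_nhdsWithin] with x hfx hx hxX
  have hpx : ‖((x, f x) : E × F) - (x₀, f x₀)‖ ≤ (1 + K) * ‖x - x₀‖ := by
    rw [Prod.norm_def, Prod.fst_sub, Prod.snd_sub]
    exact max_le (by nlinarith [norm_nonneg (x - x₀)]) (by nlinarith [norm_nonneg (x - x₀)])
  have hnormal := hab (x, f x) (mem_gph_restr_singleton.2 ⟨rfl, hxX⟩)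
    (hpx.trans_lt (by rwa [lt_div_iff₀' hK1] at hx))
  simp only at hnormal
  have hscale : ε / (1 + K) * ‖((x, f x) : E × F) - (x₀, f x₀)‖ ≤ ε * ‖x - x₀‖ :=
    calc _ ≤ ε / (1 + K) * ((1 + K) * ‖x - x₀‖) := by gcongr
      _ = ε * ‖x - x₀‖ := by field_simp
  have hbz : |⟪b + z, f x - f x₀⟫| ≤ K * ‖b + z‖ * ‖x - x₀‖ :=
    calc _ ≤ ‖b + z‖ * ‖f x - f x₀‖ := abs_real_inner_le_norm _ _
      _ ≤ ‖b + z‖ * (K * ‖x - x₀‖) := by gcongr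
      _ = K * ‖b + z‖ * ‖x - x₀‖ := by ring
  have hbz' := (abs_le.1 hbz).1
  rw [inner_add_left, inner_sub_right z] at hbz'
  rw [sub_self, norm_zero, mul_zero, add_zero]
  linarith

theorem fCoderiv_restr_singleton_eq {K : ℝ≥0} {U : Set E} (hU : U ∈ 𝓝 x₀)
    (hf : LipschitzOnWith K f (X ∩ U)) (z : F) :
    fCoderiv (restr (fun x => {f x}) X) x₀ (f x₀) z = fSubdiffOn (fun x => ⟪z, f x⟫) X x₀ := by
  ext v
  refine ⟨fun hv => ?_, mem_fNormal2_gph_of_mem_fSubdiffOn⟩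
  have hx₀ : x₀ ∈ X ∩ U := ⟨(mem_gph_restr_singleton.1 hv.1).2, mem_of_mem_nhds hU⟩
  simpa using
    mem_fSubdiffOn_add_of_mem_fNormal2_gph (z := z) K.2 (hf.eventually_norm_sub_le hU hx₀) hv

theorem exists_seq_of_mem_lNormal2 {D : Set (E × F)} {p v : E × F} (hv : v ∈ lNormal2 D p)
    {U : Set (E × F)} (hU : U ∈ 𝓝 p) :
    ∃ zk vk : ℕ → E × F, (∀ k, zk k ∈ U) ∧ (∀ k, vk k ∈ fNormal2 D (zk k)) ∧
      Tendsto zk atTop (𝓝 p) ∧ Tendsto vk atTop (𝓝 v) := by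
  obtain ⟨-, zk, vk, hvk, hzk, hvk_lim⟩ := hv
  obtain ⟨N, hN⟩ := eventually_atTop.1 (hzk hU)
  exact ⟨fun k => zk (k + N), fun k => vk (k + N), fun k => hN _ (Nat.le_add_left N k),
    fun k => hvk _, hzk.comp (tendsto_add_atTop_nat N), hvk_lim.comp (tendsto_add_atTop_nat N)⟩

theorem exists_mem_fSubdiffOn_near_of_mem_fNormal2_gph [ProperSpace E] (hX : IsClosed X)
    {K : ℝ≥0} {U : Set E} (hU : U ∈ 𝓝 x₀) (hf : LipschitzOnWith K f (X ∩ U)) {a : E} {b : F}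
    (hab : (a, b) ∈ fNormal2 (gph (restr (fun x => {f x}) X)) (x₀, f x₀)) {η : ℝ} (hη : 0 < η) :
    ∃ x, ‖x - x₀‖ ≤ η ∧
      ∃ a' ∈ fSubdiffOn (fun x => ⟪z, f x⟫) X x, ‖a' - a‖ ≤ 2 * (K * ‖b + z‖) + η := by
  have hx₀ : x₀ ∈ X ∩ U := ⟨(mem_gph_restr_singleton.1 hab.1).2, mem_of_mem_nhds hU⟩
  obtain ⟨r, hr, hrU⟩ := nhds_basis_closedBall.mem_iff.1 hU
  have hg : ContinuousOn (fun x => ⟪z, f x⟫) (X ∩ closedBall x₀ r) :=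
    continuousOn_const.inner (hf.continuousOn.mono (inter_subset_inter_right X hrU))
  exact exists_mem_fSubdiffOn_near hX (by positivity) hr hη hg.lowerSemicontinuousOn
    (mem_fSubdiffOn_add_of_mem_fNormal2_gph K.2 (hf.eventually_norm_sub_le hU hx₀) hab)

theorem mem_coderiv_of_mem_lSubdiffOn (hf : ContinuousWithinAt f X x₀) {v : E}
    (hv : v ∈ lSubdiffOn (fun x => ⟪z, f x⟫) X x₀) :
    v ∈ coderiv (restr (fun x => {f x}) X) x₀ (f x₀) z := by
  obtain ⟨hx₀, xk, vk, hvk, hxk, -, hvk_lim⟩ := hv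
  refine ⟨mem_gph_restr_singleton.2 ⟨rfl, hx₀⟩, fun k => (xk k, f (xk k)), fun k => (vk k, -z),
    fun k => mem_fNormal2_gph_of_mem_fSubdiffOn (hvk k), hxk.prodMk_nhds ?_,
    hvk_lim.prodMk_nhds tendsto_const_nhds⟩
  exact hf.tendsto.comp (tendsto_nhdsWithin_iff.2 ⟨hxk, Eventually.of_forall fun k => (hvk k).1⟩)

theorem mem_lSubdiffOn_of_mem_coderiv [ProperSpace E] (hX : IsClosed X) {K : ℝ≥0} {U : Set E}
    (hU : IsOpen U) (hx₀U : x₀ ∈ U) (hf : LipschitzOnWith K f (X ∩ U)) {v : E}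
    (hv : v ∈ coderiv (restr (fun x => {f x}) X) x₀ (f x₀) z) :
    v ∈ lSubdiffOn (fun x => ⟪z, f x⟫) X x₀ := by
  have hx₀ : x₀ ∈ X := (mem_gph_restr_singleton.1 hv.1).2
  obtain ⟨zk, vk, hzkU, hvk, hzk, hvk_lim⟩ :=
    exists_seq_of_mem_lNormal2 hv
      (continuous_fst.continuousAt.preimage_mem_nhds (hU.mem_nhds hx₀U))
  have hzk_gph (k : ℕ) : zk k = ((zk k).1, f (zk k).1) :=
    Prod.ext rfl (mem_gph_restr_singleton.1 (hvk k).1).1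
  have hnear (k : ℕ) : ∃ x, ‖x - (zk k).1‖ ≤ 1 / (k + 1) ∧
      ∃ a ∈ fSubdiffOn (fun x => ⟪z, f x⟫) X x,
        ‖a - (vk k).1‖ ≤ 2 * (K * ‖(vk k).2 + z‖) + 1 / (k + 1) :=
    exists_mem_fSubdiffOn_near_of_mem_fNormal2_gph hX (hU.mem_nhds (hzkU k)) hf
      (hzk_gph k ▸ hvk k) Nat.one_div_pos_of_nat
  choose xk hxk ak hak hak_near using hnear
  have hxk_lim : Tendsto xk atTop (𝓝 x₀) := by
    refine tendsto_of_tendsto_of_dist ((continuous_fst.tendsto _).comp hzk)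
      (squeeze_zero (fun _ => dist_nonneg) (fun k => ?_) tendsto_one_div_add_atTop_nhds_zero_nat)
    rw [dist_comm, dist_eq_norm]
    exact hxk k
  have hak_lim : Tendsto ak atTop (𝓝 v) := by
    have hbound : Tendsto (fun k : ℕ => 2 * (K * ‖(vk k).2 + z‖) + 1 / (k + 1)) atTop (𝓝 0) := by
      simpa using ((((continuous_snd.tendsto _).comp hvk_lim).add_const z).norm.const_mul
        (K : ℝ)).const_mul 2 |>.add tendsto_one_div_add_atTop_nhds_zero_nat
    refine tendsto_of_tendsto_of_dist ((continuous_fst.tendsto _).comp hvk_lim)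
      (squeeze_zero (fun _ => dist_nonneg) (fun k => ?_) hbound)
    rw [dist_comm, dist_eq_norm]
    exact hak_near k
  have hxk_within : Tendsto xk atTop (𝓝[X] x₀) :=
    tendsto_nhdsWithin_iff.2 ⟨hxk_lim, Eventually.of_forall fun k => (hak k).1⟩
  exact ⟨hx₀, xk, ak, hak, hxk_lim, tendsto_const_nhds.inner
    ((hf.continuousWithinAt_of_inter (hU.mem_nhds hx₀U) hx₀).tendsto.comp hxk_within), hak_lim⟩

theorem coderiv_restr_singleton_eq [ProperSpace E] (hX : IsClosed X) {K : ℝ≥0} {U : Set E}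
    (hU : IsOpen U) (hx₀U : x₀ ∈ U) (hf : LipschitzOnWith K f (X ∩ U)) (z : F) :
    coderiv (restr (fun x => {f x}) X) x₀ (f x₀) z = lSubdiffOn (fun x => ⟪z, f x⟫) X x₀ := by
  ext v
  exact ⟨mem_lSubdiffOn_of_mem_coderiv hX hU hx₀U hf, fun hv =>
    mem_coderiv_of_mem_lSubdiffOn (hf.continuousWithinAt_of_inter (hU.mem_nhds hx₀U) hv.1) hv⟩

end Coderivative

theorem stmt14_general {n m : ℕ} (X : Set (Euc n)) (hX : IsClosed X)
    (f : Euc n → Euc m) (xb : Euc n)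
    (hf : StrictlyContinuousRelAt f X xb) :
    ∀ z : Euc m,
      fCoderiv (restr (fun x => {f x}) X) xb (f xb) z =
        fSubdiffOn (fun x => (inner ℝ z (f x) : ℝ)) X xb ∧
      coderiv (restr (fun x => {f x}) X) xb (f xb) z =
        lSubdiffOn (fun x => (inner ℝ z (f x) : ℝ)) X xb := by
  obtain ⟨K, δ, hδ, hK⟩ := hf.exists_lipschitzOnWith
  exact fun z => ⟨fCoderiv_restr_singleton_eq (ball_mem_nhds xb hδ) hK z,
    coderiv_restr_singleton_eq hX isOpen_ball (mem_ball_self hδ) hK z⟩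

/-- Scalarization of coderivatives of a restricted strictly
continuous single-valued map: `D̂*F|_X(xb)(z) = ∂̂(zF|_X)(xb)` and
`D*F|_X(xb)(z) = ∂(zF|_X)(xb)`. -/
theorem stmt14 {n m : ℕ} (X : Set (Euc n)) (hX : IsClosed X)
    (f : Euc n → Euc m) (xb : Euc n) (hxb : xb ∈ X)
    (hf : StrictlyContinuousRelAt f X xb) :
    ∀ z : Euc m,
      fCoderiv (restr (fun x => {f x}) X) xb (f xb) z =
        fSubdiffOn (fun x => (inner ℝ z (f x) : ℝ)) X xb ∧
      coderiv (restr (fun x => {f x}) X) xb (f xb) z =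
        lSubdiffOn (fun x => (inner ℝ z (f x) : ℝ)) X xb :=
  stmt14_general X hX f xb hf
end
end
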